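/- arXiv:1003.5131 — 3 statements merged into one kernel-verified Lean document; each statement's English description precedes it below -/
import Mathlib

section
/- For all α, β > 0 with θ := α+β, every m ∈ ℕ and all real x, y, one has the polynomial identity Σ_{j=0}^m C(m,j) ((θ)_(m)/((α)_(j)(β)_(m−j))) (xy)^j ((1−x)(1−y))^{m−j} = Σ_{n=0}^m (m_[n]/(θ+m)_(n)) ζ_n^{α,β} R_n^{α,β}(x) R_n^{α,β}(y). -/
open MeasureTheory Finset

noncomputable section

/-- Rising factorial `(a)_(n) = a (a+1) ⋯ (a+n−1)`. -/
def rf (a : ℝ) : ℕ → ℝ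
  | 0 => 1
  | n + 1 => rf a n * (a + n)

/-- Falling factorial `N_[n] = N (N−1) ⋯ (N−n+1)` of a natural number, as a real. -/
def ff (N n : ℕ) : ℝ := (N.descFactorial n : ℝ)

/-- Triangular array `a^θ_{n,m}` (meaningful for `0 ≤ m ≤ n`). -/
def acoef (θ : ℝ) (n m : ℕ) : ℝ :=
  if n = 0 then 1
  else (θ + 2 * n - 1) * (-1 : ℝ) ^ (n - m) * rf (θ + m) (n - 1) /
    ((m.factorial : ℝ) * ((n - m).factorial : ℝ))

/-- The simplex `Δ_{d−1} = {x ∈ [0,1]^d : x₁ + ⋯ + x_d = 1}`. -/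
def simplex (d : ℕ) : Set (Fin d → ℝ) :=
  {x | (∀ i, 0 ≤ x i ∧ x i ≤ 1) ∧ ∑ i, x i = 1}

/-- `ξ^α_m(x,y)`. -/
def xiK {d : ℕ} (α : Fin d → ℝ) (m : ℕ) (x y : Fin d → ℝ) : ℝ :=
  ∑ l ∈ Finset.Nat.antidiagonalTuple d m,
    ((m.factorial : ℝ) / ∏ i, ((l i).factorial : ℝ)) *
      (rf (∑ i, α i) m / ∏ i, rf (α i) (l i)) * ∏ i, (x i * y i) ^ l i

/-- Jacobi polynomial kernel `Q^α_n(x,y)`. -/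
def Qker {d : ℕ} (α : Fin d → ℝ) (n : ℕ) (x y : Fin d → ℝ) : ℝ :=
  ∑ m ∈ Finset.range (n + 1), acoef (∑ i, α i) n m * xiK α m x y

/-- Dirichlet–multinomial pmf `DM_α(l; m)`. -/
def DM {d : ℕ} (α : Fin d → ℝ) (l : Fin d → ℕ) (m : ℕ) : ℝ :=
  ((m.factorial : ℝ) / ∏ i, ((l i).factorial : ℝ)) *
    (∏ i, rf (α i) (l i)) / rf (∑ i, α i) m

/-- `ξ^{H,α}_m(r,s)`. -/
def xiH {d : ℕ} (α : Fin d → ℝ) (m : ℕ) (r s : Fin d → ℕ) : ℝ :=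
  ∑ l ∈ Finset.Nat.antidiagonalTuple d m,
    DM (fun i => α i + r i) l m * DM (fun i => α i + s i) l m / DM α l m

/-- Hahn polynomial kernel `H^α_n(r,s)` for `|r| = |s| = N`. -/
def Hker {d : ℕ} (α : Fin d → ℝ) (N n : ℕ) (r s : Fin d → ℕ) : ℝ :=
  (rf ((∑ i, α i) + N) n / ff N n) *
    ∑ m ∈ Finset.range (n + 1), acoef (∑ i, α i) n m * xiH α m r s

/-- `χ^{H,α}_m(r,s)`. -/
def chiH {d : ℕ} (α : Fin d → ℝ) (N m : ℕ) (r s : Fin d → ℕ) : ℝ :=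
  ∑ l ∈ Finset.Nat.antidiagonalTuple d m,
    (1 / DM α l m) *
      (((m.factorial : ℝ) / ∏ i, ((l i).factorial : ℝ)) * (∏ i, ff (r i) (l i)) / ff N m) *
      (((m.factorial : ℝ) / ∏ i, ((l i).factorial : ℝ)) * (∏ i, ff (s i) (l i)) / ff N m)

/-- Normalized Jacobi polynomial `R_n^{a,b}` on `[0,1]`. -/
def Rpoly (a b : ℝ) (n : ℕ) (x : ℝ) : ℝ :=
  ∑ k ∈ Finset.range (n + 1),
    (-1 : ℝ) ^ k * (n.choose k : ℝ) * (rf ((n : ℝ) + (a + b) - 1) k / rf b k) * (1 - x) ^ k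

/-- `ζ_n^{a,b}`. -/
def zeta (a b : ℝ) (n : ℕ) : ℝ :=
  if n = 0 then 1
  else ((a + b) + 2 * n - 1) * rf (a + b) (n - 1) * rf b n / ((n.factorial : ℝ) * rf a n)

/-- Hahn polynomial `h_n^{a,b}(r; N)`. -/
def hahnPoly (a b : ℝ) (N n r : ℕ) : ℝ :=
  ∑ k ∈ Finset.range (n + 1),
    (-1 : ℝ) ^ k * (n.choose k : ℝ) * rf ((n : ℝ) + (a + b) - 1) k * ff r k /
      (rf a k * ff N k)

/-- `u^{a,b}_{N,n}`. -/
def uCoef (a b : ℝ) (N n : ℕ) : ℝ :=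
  if n = 0 then 1
  else (N.choose n : ℝ) * ((a + b) + 2 * n - 1) * rf (a + b) (n - 1) * rf a n /
    (rf ((a + b) + N) n * rf b n)

/-- Beta function `B(a,b) = Γ(a)Γ(b)/Γ(a+b)`. -/
def BetaFn (a b : ℝ) : ℝ := Real.Gamma a * Real.Gamma b / Real.Gamma (a + b)

/-- Condition (G) on the parameter vector `α`. -/
def CondG {d : ℕ} (α : Fin d → ℝ) : Prop :=
  ∀ j : Fin d, 0 < (j : ℕ) →
    (α j ≤ ∑ i ∈ Finset.univ.filter fun i : Fin d => (i : ℕ) < (j : ℕ), α i) ∧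
      (1 / 2 ≤ α j ∨ 2 ≤ ∑ i ∈ Finset.univ.filter fun i : Fin d => (i : ℕ) ≤ (j : ℕ), α i)

/-- Density of the Dirichlet distribution in the coordinates `(u₁, …, u_{d−1})`. -/
def dirichletDensity (k : ℕ) (α : Fin (k + 1) → ℝ) (u : Fin k → ℝ) : ℝ :=
  if (∀ i, 0 < u i ∧ u i < 1) ∧ ∑ i, u i < 1 then
    (Real.Gamma (∑ i, α i) / ∏ i, Real.Gamma (α i)) *
      (∏ i : Fin k, u i ^ (α (Fin.castSucc i) - 1)) * (1 - ∑ i, u i) ^ (α (Fin.last k) - 1)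
  else 0

/-- The Dirichlet probability measure `D_α` on `Δ_{d−1} ⊆ ℝ^d`, `d = k + 1`. -/
def dirichlet (k : ℕ) (α : Fin (k + 1) → ℝ) : Measure (Fin (k + 1) → ℝ) :=
  ((volume : Measure (Fin k → ℝ)).withDensity fun u =>
      ENNReal.ofReal (dirichletDensity k α u)).map fun u => Fin.snoc u (1 - ∑ i, u i)

lemma rf_zero (a : ℝ) : rf a 0 = 1 := rfl
lemma rf_succ (a : ℝ) (n : ℕ) : rf a (n + 1) = rf a n * (a + n) := rfl

lemma rf_add (a : ℝ) (p q : ℕ) : rf a (p + q) = rf a p * rf (a + p) q := by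
  induction q with
  | zero => simp [rf_zero]
  | succ q ih => rw [← Nat.add_assoc, rf_succ, rf_succ, ih]; push_cast; ring

lemma rf_head (a : ℝ) (q : ℕ) : rf a (q + 1) = a * rf (a + 1) q := by
  rw [Nat.add_comm, rf_add]; simp [rf_succ, rf_zero]

lemma rf_pos {a : ℝ} (h : 0 < a) (n : ℕ) : 0 < rf a n := by
  induction n with
  | zero => norm_num [rf_zero]
  | succ n ih => rw [rf_succ]; positivity

lemma rf_ne_zero {a : ℝ} (h : 0 < a) (n : ℕ) : rf a n ≠ 0 := (rf_pos h n).ne'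

lemma rf_eq_prod (a : ℝ) (n : ℕ) : rf a n = ∏ i ∈ range n, (a + i) := by
  induction n with
  | zero => simp [rf_zero]
  | succ n ih => rw [rf_succ, prod_range_succ, ih]

lemma rf_one (n : ℕ) : rf 1 n = n.factorial := by
  induction n with
  | zero => simp [rf_zero]
  | succ n ih => rw [rf_succ, ih, Nat.factorial_succ]; push_cast; ring

lemma rf_reflect (z : ℝ) (q : ℕ) : rf (1 - z - q) q = (-1) ^ q * rf z q := by
  rw [rf_eq_prod, rf_eq_prod, ← prod_range_reflect]
  rw [show ((-1 : ℝ)) ^ q = ∏ _i ∈ range q, (-1 : ℝ) by simp, ← prod_mul_distrib]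
  refine prod_congr rfl fun i hi => ?_
  rw [mem_range] at hi
  have h2 : q - 1 - i = q - (i + 1) := by omega
  rw [h2, Nat.cast_sub (by omega)]; push_cast; ring

lemma ff_eq_prod (N n : ℕ) : ff N n = ∏ i ∈ range n, ((N : ℝ) - i) := by
  rcases le_or_gt n N with h | h
  · rw [ff, Nat.descFactorial_eq_prod_range]
    push_cast [Nat.cast_prod]
    refine prod_congr rfl fun i hi => ?_
    rw [mem_range] at hi
    rw [Nat.cast_sub (by omega)]
  · rw [ff, Nat.descFactorial_eq_zero_iff_lt.mpr h, prod_eq_zero (mem_range.mpr h)]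
    · simp
    · simp

lemma ff_eq_rf (N n : ℕ) : ff N n = rf ((N : ℝ) - n + 1) n := by
  rw [ff_eq_prod, rf_eq_prod, ← prod_range_reflect]
  refine prod_congr rfl fun i hi => ?_
  rw [mem_range] at hi
  have h2 : n - 1 - i = n - (i + 1) := by omega
  rw [h2, Nat.cast_sub (by omega)]; push_cast; ring
/-- Vandermonde convolution for rising factorials. -/
lemma vdm1 (u : ℝ) : ∀ (M : ℕ) (v : ℝ),
    ∑ i ∈ range (M + 1), (M.choose i : ℝ) * rf u i * rf v (M - i) = rf (u + v) M := by
  intro M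
  induction M with
  | zero => intro v; simp [rf_zero]
  | succ M ih =>
    intro v
    have e1 : ∀ i ∈ range (M + 1),
        ((M + 1).choose (i + 1) : ℝ) * rf u (i + 1) * rf v (M + 1 - (i + 1)) =
          (M.choose i : ℝ) * rf u i * rf v (M - i) * (u + i)
          + ((M.choose (i + 1) : ℝ) * rf u (i + 1) * rf v (M - (i + 1)) * (v + ((M - (i + 1) : ℕ) : ℝ))) := by
      intro i hi
      rw [mem_range] at hi
      rw [Nat.choose_succ_succ, show M + 1 - (i + 1) = M - i by omega]
      rcases Nat.lt_or_ge i M with h | h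
      · rw [show M - i = (M - (i + 1)) + 1 by omega, rf_succ, rf_succ,
          Nat.cast_sub (by omega : i + 1 ≤ M)]
        push_cast
        ring
      · have h3 : i = M := by omega
        subst h3
        simp [rf_succ, Nat.choose_succ_self, rf_zero]
    have hC : ∑ x ∈ range (M + 1 + 1),
          ((M.choose x : ℝ) * rf u x * rf v (M - x) * (v + ((M - x : ℕ) : ℝ)))
        = (∑ i ∈ range (M + 1),
            ((M.choose (i + 1) : ℝ) * rf u (i + 1) * rf v (M - (i + 1)) * (v + ((M - (i + 1) : ℕ) : ℝ))))
          + ((M.choose 0 : ℝ) * rf u 0 * rf v (M - 0) * (v + ((M - 0 : ℕ) : ℝ))) :=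
      sum_range_succ' _ _
    calc ∑ i ∈ range (M + 1 + 1), ((M + 1).choose i : ℝ) * rf u i * rf v (M + 1 - i)
        = (∑ i ∈ range (M + 1), ((M + 1).choose (i + 1) : ℝ) * rf u (i + 1) * rf v (M + 1 - (i + 1)))
            + ((M + 1).choose 0 : ℝ) * rf u 0 * rf v (M + 1 - 0) := sum_range_succ' _ _
      _ = (∑ i ∈ range (M + 1),
            ((M.choose i : ℝ) * rf u i * rf v (M - i) * (u + i)
              + ((M.choose (i + 1) : ℝ) * rf u (i + 1) * rf v (M - (i + 1)) * (v + ((M - (i + 1) : ℕ) : ℝ)))))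
            + ((M.choose 0 : ℝ) * rf u 0 * rf v (M - 0) * (v + ((M - 0 : ℕ) : ℝ))) := by
          rw [sum_congr rfl e1]
          congr 1
          simp [rf_zero, rf_succ]
      _ = (∑ i ∈ range (M + 1), (M.choose i : ℝ) * rf u i * rf v (M - i) * (u + i))
            + ((∑ i ∈ range (M + 1),
                ((M.choose (i + 1) : ℝ) * rf u (i + 1) * rf v (M - (i + 1)) * (v + ((M - (i + 1) : ℕ) : ℝ))))
              + ((M.choose 0 : ℝ) * rf u 0 * rf v (M - 0) * (v + ((M - 0 : ℕ) : ℝ)))) := by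
          rw [sum_add_distrib, add_assoc]
      _ = (∑ i ∈ range (M + 1), (M.choose i : ℝ) * rf u i * rf v (M - i) * (u + i))
            + ∑ x ∈ range (M + 1 + 1),
                ((M.choose x : ℝ) * rf u x * rf v (M - x) * (v + ((M - x : ℕ) : ℝ))) := by rw [hC]
      _ = (∑ i ∈ range (M + 1), (M.choose i : ℝ) * rf u i * rf v (M - i) * (u + i))
            + ∑ x ∈ range (M + 1),
                ((M.choose x : ℝ) * rf u x * rf v (M - x) * (v + ((M - x : ℕ) : ℝ))) := by
          have hz : (M.choose (M + 1) : ℝ) * rf u (M + 1) * rf v (M - (M + 1))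
              * (v + ((M - (M + 1) : ℕ) : ℝ)) = 0 := by
            simp [Nat.choose_succ_self]
          rw [sum_range_succ _ (M + 1), hz, add_zero]
      _ = ∑ i ∈ range (M + 1), ((M.choose i : ℝ) * rf u i * rf v (M - i)) * (u + v + M) := by
          rw [← sum_add_distrib]
          refine sum_congr rfl fun i hi => ?_
          rw [mem_range] at hi
          rw [Nat.cast_sub (by omega : i ≤ M)]
          ring
      _ = rf (u + v) M * ((u + v) + M) := by rw [← sum_mul, ih v]
      _ = rf (u + v) (M + 1) := (rf_succ _ _).symm
/-- Second Vandermonde-type convolution. -/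
lemma vdm2 (x : ℝ) : ∀ (n : ℕ) (y : ℝ),
    ∑ k ∈ range (n + 1), (-1 : ℝ) ^ k * (n.choose k : ℝ) * rf x k * rf (y + k) (n - k)
      = rf (y - x) n := by
  intro n
  induction n with
  | zero => intro y; simp [rf_zero]
  | succ n ih =>
    intro y
    have e1 : ∀ k ∈ range (n + 1),
        (-1 : ℝ) ^ (k + 1) * ((n + 1).choose (k + 1) : ℝ) * rf x (k + 1) * rf (y + ((k + 1 : ℕ) : ℝ)) (n + 1 - (k + 1)) =
          (-((-1 : ℝ) ^ k * (n.choose k : ℝ) * rf x k * (x + k) * rf (y + 1 + k) (n - k)))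
          + ((-1 : ℝ) ^ (k + 1) * (n.choose (k + 1) : ℝ) * rf x (k + 1) * rf (y + ((k + 1 : ℕ) : ℝ)) (n + 1 - (k + 1))) := by
      intro k hk
      rw [mem_range] at hk
      rw [Nat.choose_succ_succ]
      have harg : y + 1 + (k : ℝ) = y + ((k : ℕ) + 1 : ℕ) := by push_cast; ring
      rw [show n + 1 - (k + 1) = n - k by omega, harg, rf_succ]
      push_cast
      ring
    have hC : ∑ k ∈ range (n + 1 + 1),
          ((-1 : ℝ) ^ k * (n.choose k : ℝ) * rf x k * rf (y + k) (n + 1 - k))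
        = (∑ k ∈ range (n + 1),
            ((-1 : ℝ) ^ (k + 1) * (n.choose (k + 1) : ℝ) * rf x (k + 1) * rf (y + ((k + 1 : ℕ) : ℝ)) (n + 1 - (k + 1))))
          + ((-1 : ℝ) ^ 0 * (n.choose 0 : ℝ) * rf x 0 * rf (y + (0 : ℕ)) (n + 1 - 0)) :=
      sum_range_succ' _ _
    calc ∑ k ∈ range (n + 1 + 1), (-1 : ℝ) ^ k * ((n + 1).choose k : ℝ) * rf x k * rf (y + k) (n + 1 - k)
        = (∑ k ∈ range (n + 1),
              (-1 : ℝ) ^ (k + 1) * ((n + 1).choose (k + 1) : ℝ) * rf x (k + 1) * rf (y + ((k + 1 : ℕ) : ℝ)) (n + 1 - (k + 1)))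
            + (-1 : ℝ) ^ 0 * ((n + 1).choose 0 : ℝ) * rf x 0 * rf (y + (0 : ℕ)) (n + 1 - 0) := sum_range_succ' _ _
      _ = (∑ k ∈ range (n + 1),
              ((-((-1 : ℝ) ^ k * (n.choose k : ℝ) * rf x k * (x + k) * rf (y + 1 + k) (n - k)))
              + ((-1 : ℝ) ^ (k + 1) * (n.choose (k + 1) : ℝ) * rf x (k + 1) * rf (y + ((k + 1 : ℕ) : ℝ)) (n + 1 - (k + 1)))))
            + (-1 : ℝ) ^ 0 * ((n + 1).choose 0 : ℝ) * rf x 0 * rf (y + (0 : ℕ)) (n + 1 - 0) := by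
          rw [sum_congr rfl e1]
      _ = (∑ k ∈ range (n + 1), -((-1 : ℝ) ^ k * (n.choose k : ℝ) * rf x k * (x + k) * rf (y + 1 + k) (n - k)))
            + ((∑ k ∈ range (n + 1),
                ((-1 : ℝ) ^ (k + 1) * (n.choose (k + 1) : ℝ) * rf x (k + 1) * rf (y + ((k + 1 : ℕ) : ℝ)) (n + 1 - (k + 1))))
              + ((-1 : ℝ) ^ 0 * (n.choose 0 : ℝ) * rf x 0 * rf (y + (0 : ℕ)) (n + 1 - 0))) := by
          rw [sum_add_distrib, add_assoc]
          norm_num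
      _ = (∑ k ∈ range (n + 1), -((-1 : ℝ) ^ k * (n.choose k : ℝ) * rf x k * (x + k) * rf (y + 1 + k) (n - k)))
            + ∑ k ∈ range (n + 1 + 1), ((-1 : ℝ) ^ k * (n.choose k : ℝ) * rf x k * rf (y + k) (n + 1 - k)) := by
          rw [hC]
      _ = (∑ k ∈ range (n + 1), -((-1 : ℝ) ^ k * (n.choose k : ℝ) * rf x k * (x + k) * rf (y + 1 + k) (n - k)))
            + ∑ k ∈ range (n + 1), ((-1 : ℝ) ^ k * (n.choose k : ℝ) * rf x k * rf (y + k) (n + 1 - k)) := by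
          have hz : (-1 : ℝ) ^ (n + 1) * (n.choose (n + 1) : ℝ) * rf x (n + 1) * rf (y + (n + 1 : ℕ)) (n + 1 - (n + 1)) = 0 := by
            simp [Nat.choose_succ_self]
          rw [sum_range_succ _ (n + 1), hz, add_zero]
      _ = (y - x) * ∑ k ∈ range (n + 1), (-1 : ℝ) ^ k * (n.choose k : ℝ) * rf x k * rf ((y + 1) + k) (n - k) := by
          rw [← sum_add_distrib, mul_sum]
          refine sum_congr rfl fun k hk => ?_
          rw [mem_range] at hk
          have h2 : rf (y + k) (n + 1 - k) = (y + k) * rf (y + k + 1) (n - k) := by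
            rw [show n + 1 - k = (n - k) + 1 by omega, rf_head]
          rw [h2, show y + 1 + (k : ℝ) = y + (k : ℝ) + 1 by ring]
          ring
      _ = rf (y - x) (n + 1) := by
          rw [ih (y + 1), rf_head, show y + 1 - x = y - x + 1 by ring]

lemma ff_pos {k N : ℕ} (h : k ≤ N) : 0 < ff N k := by
  rw [ff]
  have : N.descFactorial k ≠ 0 := by
    rw [Ne, Nat.descFactorial_eq_zero_iff_lt]
    omega
  positivity

lemma ff_of_lt {k N : ℕ} (h : N < k) : ff N k = 0 := by
  rw [ff, Nat.descFactorial_eq_zero_iff_lt.mpr h, Nat.cast_zero]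

lemma ff_cast {k N : ℕ} (h : k ≤ N) : ff N k = (N.factorial : ℝ) / ((N - k).factorial : ℝ) := by
  have h1 : N.descFactorial k * (N - k).factorial = N.factorial := by
    rw [mul_comm]; exact Nat.factorial_mul_descFactorial h
  field_simp [ff]
  unfold ff
  exact_mod_cast congrArg (Nat.cast (R := ℝ)) h1

lemma cast1 {m k j : ℕ} (h : k + j ≤ m) :
    ff (k + j) k * (m.choose (k + j) : ℝ) = ff m k * ((m - k).choose j : ℝ) := by
  rw [ff_cast (Nat.le_add_right k j), ff_cast (le_trans (Nat.le_add_right k j) h),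
    Nat.cast_choose ℝ h, Nat.cast_choose ℝ (by omega : j ≤ m - k),
    show k + j - k = j by omega, show m - (k + j) = m - k - j by omega]
  have h1 : ((k + j).factorial : ℝ) ≠ 0 := by positivity
  have h2 : (j.factorial : ℝ) ≠ 0 := by positivity
  have h3 : ((m - k).factorial : ℝ) ≠ 0 := by positivity
  have h4 : ((m - k - j).factorial : ℝ) ≠ 0 := by positivity
  field_simp

lemma cast2 {m k i : ℕ} (hk : k ≤ m) (hi : i ≤ m) :
    ((m - k).choose i : ℝ) * ff m k = (m.choose i : ℝ) * ff (m - i) k := by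
  rcases le_or_gt (i + k) m with h | h
  · rw [ff_cast hk, ff_cast (by omega : k ≤ m - i), Nat.cast_choose ℝ (by omega : i ≤ m - k),
      Nat.cast_choose ℝ hi, show m - k - i = m - i - k by omega]
    have h1 : ((m - k).factorial : ℝ) ≠ 0 := by positivity
    have h2 : ((i).factorial : ℝ) ≠ 0 := by positivity
    have h3 : ((m - i).factorial : ℝ) ≠ 0 := by positivity
    have h4 : ((m - i - k).factorial : ℝ) ≠ 0 := by positivity
    field_simp
  · rw [Nat.choose_eq_zero_of_lt (by omega : m - k < i), ff_of_lt (by omega : m - i < k)]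
    simp

/-- Conversion of falling factorials to the `rf (b+j) s` basis. -/
lemma ffconv (b : ℝ) (j q : ℕ) :
    ff j q = ∑ s ∈ range (q + 1),
      (q.choose s : ℝ) * rf (b + j) s * ((-1 : ℝ) ^ (q - s) * rf (b + s) (q - s)) := by
  have h1 : ∀ s ∈ range (q + 1),
      (q.choose s : ℝ) * rf (b + j) s * ((-1 : ℝ) ^ (q - s) * rf (b + s) (q - s))
        = (q.choose s : ℝ) * rf (b + j) s * rf (1 - b - q) (q - s) := by
    intro s hs
    rw [mem_range] at hs
    rw [← rf_reflect ((b : ℝ) + s) (q - s)]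
    congr 2
    rw [Nat.cast_sub (by omega : s ≤ q)]
    ring
  rw [sum_congr rfl h1, vdm1, ff_eq_rf]
  congr 1
  ring

/-- Factorial moments of the beta-binomial weight, via Vandermonde. -/
lemma moment (a b : ℝ) (m k s : ℕ) (hk : k ≤ m) :
    ∑ j ∈ range (m + 1), (m.choose j : ℝ) * rf b j * rf a (m - j) * (ff j k * rf (b + j) s)
      = ff m k * rf b (k + s) * rf (a + b + k + s) (m - k) := by
  have hzero : ∀ j ∈ range k, (m.choose j : ℝ) * rf b j * rf a (m - j) * (ff j k * rf (b + j) s) = 0 := by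
    intro j hj
    rw [mem_range] at hj
    rw [ff_of_lt hj]
    ring
  have hsplit : ∑ j ∈ range (m + 1), (m.choose j : ℝ) * rf b j * rf a (m - j) * (ff j k * rf (b + j) s)
      = ∑ j ∈ range (m - k + 1),
          (m.choose (k + j) : ℝ) * rf b (k + j) * rf a (m - (k + j)) * (ff (k + j) k * rf (b + ((k + j : ℕ) : ℝ)) s) := by
    rw [range_eq_Ico, ← Finset.sum_Ico_consecutive _ (Nat.zero_le k) (by omega : k ≤ m + 1),
      ← range_eq_Ico]
    rw [sum_eq_zero hzero, zero_add, Finset.sum_Ico_eq_sum_range]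
    rw [show m + 1 - k = m - k + 1 by omega]
  rw [hsplit]
  have hterm : ∀ j ∈ range (m - k + 1),
      (m.choose (k + j) : ℝ) * rf b (k + j) * rf a (m - (k + j)) * (ff (k + j) k * rf (b + ((k + j : ℕ) : ℝ)) s)
        = (ff m k * rf b (k + s)) * (((m - k).choose j : ℝ) * rf (b + k + s) j * rf a (m - k - j)) := by
    intro j hj
    rw [mem_range] at hj
    have hkj : k + j ≤ m := by omega
    have e1 : ff (k + j) k * (m.choose (k + j) : ℝ) = ff m k * ((m - k).choose j : ℝ) := cast1 hkj
    have e2 : rf b (k + j) * rf (b + ((k + j : ℕ) : ℝ)) s = rf b (k + s) * rf (b + k + s) j := by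
      have r1 : rf b (k + j + s) = rf b (k + j) * rf (b + ((k + j : ℕ) : ℝ)) s := rf_add b (k + j) s
      have r2 : rf b (k + s + j) = rf b (k + s) * rf (b + k + s) j := by
        rw [rf_add b (k + s) j]
        push_cast
        ring
      rw [show k + j + s = k + s + j by omega] at r1
      rw [r1] at r2
      exact r2
    have e3 : m - (k + j) = m - k - j := by omega
    rw [e3]
    calc (m.choose (k + j) : ℝ) * rf b (k + j) * rf a (m - k - j) * (ff (k + j) k * rf (b + ((k + j : ℕ) : ℝ)) s)
        = (ff (k + j) k * (m.choose (k + j) : ℝ)) * (rf b (k + j) * rf (b + ((k + j : ℕ) : ℝ)) s) * rf a (m - k - j) := by ring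
      _ = (ff m k * ((m - k).choose j : ℝ)) * (rf b (k + s) * rf (b + k + s) j) * rf a (m - k - j) := by rw [e1, e2]
      _ = (ff m k * rf b (k + s)) * (((m - k).choose j : ℝ) * rf (b + k + s) j * rf a (m - k - j)) := by ring
  rw [sum_congr rfl hterm, ← mul_sum, vdm1 (b + k + s) (m - k) a]
  congr 1
  ring_nf

/-- Hahn-type polynomial values. -/
def Hfun (a b : ℝ) (m n j : ℕ) : ℝ :=
  ∑ k ∈ range (n + 1),
    (-1 : ℝ) ^ k * (n.choose k : ℝ) * (rf ((n : ℝ) + (a + b) - 1) k / (rf b k * ff m k)) * ff j k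

/-- The key inner-product computation. -/
lemma Ulem (a b : ℝ) (hb : 0 < b) (m n s : ℕ) (hn : n ≤ m) :
    ∑ j ∈ range (m + 1), (m.choose j : ℝ) * rf b j * rf a (m - j) * (Hfun a b m n j * rf (b + j) s)
      = ∑ i ∈ range (s + 1), (-1 : ℝ) ^ i * (s.choose i : ℝ) * rf a i * rf ((i : ℝ) + 1 - n) n
          * rf (a + b + i + n) ((m - n) + (s - i)) := by
  set N : ℝ := (n : ℝ) + (a + b) - 1 with hN
  have e0 : ∀ j ∈ range (m + 1),
      (m.choose j : ℝ) * rf b j * rf a (m - j) * (Hfun a b m n j * rf (b + j) s)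
        = ∑ k ∈ range (n + 1), ((-1 : ℝ) ^ k * (n.choose k : ℝ) * (rf N k / (rf b k * ff m k)))
            * ((m.choose j : ℝ) * rf b j * rf a (m - j) * (ff j k * rf (b + j) s)) := by
    intro j _
    rw [Hfun, sum_mul, mul_sum, ← hN]
    exact sum_congr rfl fun k _ => by ring
  rw [sum_congr rfl e0, sum_comm]
  have e1 : ∀ k ∈ range (n + 1),
      ∑ j ∈ range (m + 1), ((-1 : ℝ) ^ k * (n.choose k : ℝ) * (rf N k / (rf b k * ff m k)))
          * ((m.choose j : ℝ) * rf b j * rf a (m - j) * (ff j k * rf (b + j) s))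
        = (-1 : ℝ) ^ k * (n.choose k : ℝ) * rf N k * rf (b + k) s * rf (a + b + k + s) (m - k) := by
    intro k hk
    rw [mem_range] at hk
    rw [← mul_sum, moment a b m k s (by omega)]
    have h1 : rf b (k + s) = rf b k * rf (b + k) s := rf_add b k s
    have h2 : rf b k ≠ 0 := rf_ne_zero hb k
    have h3 : ff m k ≠ 0 := (ff_pos (by omega : k ≤ m)).ne'
    field_simp [h1]
    rw [h1]
    ring
  rw [sum_congr rfl e1]
  have e2 : ∀ k ∈ range (n + 1),
      (-1 : ℝ) ^ k * (n.choose k : ℝ) * rf N k * rf (b + k) s * rf (a + b + k + s) (m - k)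
        = ∑ i ∈ range (s + 1), ((-1 : ℝ) ^ i * (s.choose i : ℝ) * rf a i * rf (a + b + i + n) ((m - n) + (s - i)))
            * ((-1 : ℝ) ^ k * (n.choose k : ℝ) * rf N k * rf ((a + b + i) + k) (n - k)) := by
    intro k hk
    rw [mem_range] at hk
    have hv : rf (b + (k : ℝ)) s = ∑ i ∈ range (s + 1),
        (-1 : ℝ) ^ i * (s.choose i : ℝ) * rf a i * rf (a + b + (k : ℝ) + i) (s - i) := by
      have := vdm2 a s (a + b + (k : ℝ))
      rw [show a + b + (k : ℝ) - a = b + (k : ℝ) by ring] at this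
      rw [← this]
    rw [hv, mul_sum, sum_mul]
    refine sum_congr rfl fun i hi => ?_
    rw [mem_range] at hi
    have key : rf (a + b + (k : ℝ) + i) (s - i) * rf (a + b + (k : ℝ) + s) (m - k)
        = rf (a + b + (i : ℝ) + n) ((m - n) + (s - i)) * rf ((a + b + (i : ℝ)) + k) (n - k) := by
      have r1 : rf (a + b + (k : ℝ) + i) ((s - i) + (m - k))
          = rf (a + b + (k : ℝ) + i) (s - i) * rf ((a + b + (k : ℝ) + i) + ((s - i : ℕ) : ℝ)) (m - k) :=
        rf_add _ _ _
      have c1 : (a + b + (k : ℝ) + i) + ((s - i : ℕ) : ℝ) = a + b + (k : ℝ) + s := by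
        rw [Nat.cast_sub (by omega : i ≤ s)]; ring
      have r2 : rf (a + b + (k : ℝ) + i) ((n - k) + ((m - n) + (s - i)))
          = rf (a + b + (k : ℝ) + i) (n - k) * rf ((a + b + (k : ℝ) + i) + ((n - k : ℕ) : ℝ)) ((m - n) + (s - i)) :=
        rf_add _ _ _
      have c2 : (a + b + (k : ℝ) + i) + ((n - k : ℕ) : ℝ) = a + b + (i : ℝ) + n := by
        rw [Nat.cast_sub (by omega : k ≤ n)]; ring
      have c3 : (s - i) + (m - k) = (n - k) + ((m - n) + (s - i)) := by omega
      have c4 : a + b + (k : ℝ) + i = (a + b + (i : ℝ)) + k := by ring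
      rw [c1] at r1
      rw [c2] at r2
      rw [c3, r2] at r1
      rw [← c4]
      linarith [r1]
    linear_combination ((-1 : ℝ) ^ k * (n.choose k : ℝ) * rf N k * ((-1 : ℝ) ^ i * (s.choose i : ℝ) * rf a i)) * key
  rw [sum_congr rfl e2, sum_comm]
  refine sum_congr rfl fun i hi => ?_
  rw [← mul_sum]
  have hw : ∑ k ∈ range (n + 1), (-1 : ℝ) ^ k * (n.choose k : ℝ) * rf N k * rf ((a + b + i) + k) (n - k)
      = rf ((i : ℝ) + 1 - n) n := by
    rw [vdm2 N n (a + b + (i : ℝ))]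
    congr 1
    rw [hN]; ring
  rw [hw]
  ring

lemma rf_nat_zero {i n : ℕ} (h : i < n) : rf ((i : ℝ) + 1 - n) n = 0 := by
  rw [rf_eq_prod]
  refine prod_eq_zero (mem_range.mpr (show n - 1 - i < n by omega)) ?_
  rw [show n - 1 - i = n - (i + 1) by omega, Nat.cast_sub (by omega : i + 1 ≤ n)]
  push_cast
  ring

lemma Ulem_lt (a b : ℝ) (hb : 0 < b) (m n s : ℕ) (hn : n ≤ m) (hs : s < n) :
    ∑ j ∈ range (m + 1), (m.choose j : ℝ) * rf b j * rf a (m - j) * (Hfun a b m n j * rf (b + j) s) = 0 := by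
  rw [Ulem a b hb m n s hn]
  refine sum_eq_zero fun i hi => ?_
  rw [mem_range] at hi
  rw [rf_nat_zero (by omega : i < n)]
  ring

lemma Ulem_diag (a b : ℝ) (hb : 0 < b) (m n : ℕ) (hn : n ≤ m) :
    ∑ j ∈ range (m + 1), (m.choose j : ℝ) * rf b j * rf a (m - j) * (Hfun a b m n j * rf (b + j) n)
      = (-1 : ℝ) ^ n * rf a n * (n.factorial : ℝ) * rf (a + b + n + n) (m - n) := by
  rw [Ulem a b hb m n n hn]
  rw [Finset.sum_eq_single_of_mem n (self_mem_range_succ n)]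
  · rw [Nat.choose_self, Nat.sub_self, show ((n : ℝ) + 1 - n) = 1 by ring, rf_one]
    push_cast
    ring
  · intro i hi hne
    rw [mem_range] at hi
    rw [rf_nat_zero (by omega : i < n)]
    ring

/-- Expansion of the Gram sum. -/
lemma gramA (a b : ℝ) (m n n' : ℕ) :
    ∑ j ∈ range (m + 1), (m.choose j : ℝ) * rf b j * rf a (m - j) * (Hfun a b m n j * Hfun a b m n' j)
      = ∑ q ∈ range (n' + 1),
          ((-1 : ℝ) ^ q * (n'.choose q : ℝ) * (rf ((n' : ℝ) + (a + b) - 1) q / (rf b q * ff m q)))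
            * ∑ s ∈ range (q + 1),
                ((q.choose s : ℝ) * ((-1 : ℝ) ^ (q - s) * rf (b + s) (q - s)))
                  * ∑ j ∈ range (m + 1),
                      (m.choose j : ℝ) * rf b j * rf a (m - j) * (Hfun a b m n j * rf (b + j) s) := by
  have e0 : ∀ j ∈ range (m + 1),
      (m.choose j : ℝ) * rf b j * rf a (m - j) * (Hfun a b m n j * Hfun a b m n' j)
        = ∑ q ∈ range (n' + 1),
            ((-1 : ℝ) ^ q * (n'.choose q : ℝ) * (rf ((n' : ℝ) + (a + b) - 1) q / (rf b q * ff m q)))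
              * ∑ s ∈ range (q + 1),
                  ((q.choose s : ℝ) * ((-1 : ℝ) ^ (q - s) * rf (b + s) (q - s)))
                    * ((m.choose j : ℝ) * rf b j * rf a (m - j) * (Hfun a b m n j * rf (b + j) s)) := by
    intro j _
    have hH : Hfun a b m n' j = ∑ q ∈ range (n' + 1),
        (-1 : ℝ) ^ q * (n'.choose q : ℝ) * (rf ((n' : ℝ) + (a + b) - 1) q / (rf b q * ff m q)) * ff j q := rfl
    rw [hH]
    simp only [mul_sum, sum_mul]
    refine sum_congr rfl fun q _ => ?_
    rw [ffconv b j q]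
    simp only [mul_sum, sum_mul]
    exact sum_congr rfl fun s _ => by ring
  rw [sum_congr rfl e0]
  simp only [mul_sum]
  rw [sum_comm]
  refine sum_congr rfl fun q _ => ?_
  rw [sum_comm]

def gval (a b : ℝ) (m n : ℕ) : ℝ :=
  (rf ((n : ℝ) + (a + b) - 1) n / (rf b n * ff m n))
    * (rf a n * (n.factorial : ℝ) * rf (a + b + n + n) (m - n))

lemma gram_lt (a b : ℝ) (hb : 0 < b) (m n n' : ℕ) (hn : n ≤ m) (h : n' < n) :
    ∑ j ∈ range (m + 1), (m.choose j : ℝ) * rf b j * rf a (m - j) * (Hfun a b m n j * Hfun a b m n' j)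
      = 0 := by
  rw [gramA]
  refine sum_eq_zero fun q hq => ?_
  rw [mem_range] at hq
  have hz : ∑ s ∈ range (q + 1),
      ((q.choose s : ℝ) * ((-1 : ℝ) ^ (q - s) * rf (b + s) (q - s)))
        * ∑ j ∈ range (m + 1), (m.choose j : ℝ) * rf b j * rf a (m - j) * (Hfun a b m n j * rf (b + j) s) = 0 := by
    refine sum_eq_zero fun s hs => ?_
    rw [mem_range] at hs
    rw [Ulem_lt a b hb m n s hn (by omega)]
    ring
  rw [hz]
  ring

lemma gram_diag (a b : ℝ) (hb : 0 < b) (m n : ℕ) (hn : n ≤ m) :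
    ∑ j ∈ range (m + 1), (m.choose j : ℝ) * rf b j * rf a (m - j) * (Hfun a b m n j * Hfun a b m n j)
      = gval a b m n := by
  rw [gramA]
  rw [Finset.sum_eq_single_of_mem n (self_mem_range_succ n)]
  · rw [Finset.sum_eq_single_of_mem n (self_mem_range_succ n)]
    · rw [Ulem_diag a b hb m n hn, Nat.choose_self, Nat.sub_self, gval]
      simp only [pow_zero, rf_zero, Nat.cast_one]
      have hsq : (-1 : ℝ) ^ n * (-1 : ℝ) ^ n = 1 := by
        rw [← pow_add, ← two_mul, pow_mul]
        norm_num
      linear_combination (rf ((n : ℝ) + (a + b) - 1) n / (rf b n * ff m n)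
        * rf a n * (n.factorial : ℝ) * rf (a + b + n + n) (m - n)) * hsq
    · intro s hs hne
      rw [mem_range] at hs
      rw [Ulem_lt a b hb m n s hn (by omega)]
      ring
  · intro q hq hne
    rw [mem_range] at hq
    have hz : ∑ s ∈ range (q + 1),
        ((q.choose s : ℝ) * ((-1 : ℝ) ^ (q - s) * rf (b + s) (q - s)))
          * ∑ j ∈ range (m + 1), (m.choose j : ℝ) * rf b j * rf a (m - j) * (Hfun a b m n j * rf (b + j) s) = 0 := by
      refine sum_eq_zero fun s hs => ?_
      rw [mem_range] at hs
      rw [Ulem_lt a b hb m n s hn (by omega)]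
      ring
    rw [hz]
    ring

lemma gram (a b : ℝ) (hb : 0 < b) (m : ℕ) {n n' : ℕ} (hn : n ≤ m) (hn' : n' ≤ m) :
    ∑ j ∈ range (m + 1), (m.choose j : ℝ) * rf b j * rf a (m - j) * (Hfun a b m n j * Hfun a b m n' j)
      = if n = n' then gval a b m n else 0 := by
  rcases lt_trichotomy n n' with h | h | h
  · rw [if_neg (by omega)]
    have e : ∀ j ∈ range (m + 1),
        (m.choose j : ℝ) * rf b j * rf a (m - j) * (Hfun a b m n j * Hfun a b m n' j)
          = (m.choose j : ℝ) * rf b j * rf a (m - j) * (Hfun a b m n' j * Hfun a b m n j) := by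
      intro j _; ring
    rw [sum_congr rfl e]
    exact gram_lt a b hb m n' n hn' h
  · subst h
    rw [if_pos rfl]
    exact gram_diag a b hb m n hn
  · rw [if_neg (by omega)]
    exact gram_lt a b hb m n n' hn h

def rho (a b : ℝ) (m n i : ℕ) : ℝ :=
  ∑ k ∈ range (n + 1),
    (-1 : ℝ) ^ k * (n.choose k : ℝ) * (rf ((n : ℝ) + (a + b) - 1) k / rf b k) * ((m - k).choose i : ℝ)

lemma rho_eq (a b : ℝ) (hb : 0 < b) (m n i : ℕ) (hn : n ≤ m) (hi : i ≤ m) :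
    rho a b m n i = (m.choose i : ℝ) * Hfun a b m n (m - i) := by
  rw [rho, Hfun, mul_sum]
  refine sum_congr rfl fun k hk => ?_
  rw [mem_range] at hk
  have hcast := cast2 (by omega : k ≤ m) hi
  have h2 : ff m k ≠ 0 := (ff_pos (by omega : k ≤ m)).ne'
  have h3 : rf b k ≠ 0 := rf_ne_zero hb k
  field_simp
  linear_combination ((n.choose k : ℝ) * rf ((n : ℝ) + (a + b) - 1) k) * hcast

lemma gram_rho (a b : ℝ) (hb : 0 < b) (m : ℕ) {n n' : ℕ} (hn : n ≤ m) (hn' : n' ≤ m) :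
    ∑ i ∈ range (m + 1), rf a i * rf b (m - i) / (m.choose i : ℝ) * (rho a b m n i * rho a b m n' i)
      = if n = n' then gval a b m n else 0 := by
  have e : ∀ i ∈ range (m + 1),
      rf a i * rf b (m - i) / (m.choose i : ℝ) * (rho a b m n i * rho a b m n' i)
        = (fun j => (m.choose j : ℝ) * rf b j * rf a (m - j) * (Hfun a b m n j * Hfun a b m n' j)) (m - i) := by
    intro i hi
    rw [mem_range] at hi
    have hi' : i ≤ m := by omega
    simp only
    rw [rho_eq a b hb m n i hn hi', rho_eq a b hb m n' i hn' hi',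
      Nat.choose_symm hi', Nat.sub_sub_self hi']
    have hc : (m.choose i : ℝ) ≠ 0 := by
      exact_mod_cast Nat.cast_ne_zero.mpr (Nat.choose_pos hi').ne'
    field_simp
  rw [sum_congr rfl e]
  have hrefl := Finset.sum_range_reflect
    (fun j => (m.choose j : ℝ) * rf b j * rf a (m - j) * (Hfun a b m n j * Hfun a b m n' j)) (m + 1)
  simp only [Nat.add_sub_cancel] at hrefl
  rw [hrefl]
  exact gram a b hb m hn hn'

lemma keyid (a b : ℝ) (m n : ℕ) (h1 : 1 ≤ n) (h2 : n ≤ m) :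
    rf ((n : ℝ) + (a + b) - 1) n * ((a + b) + 2 * n - 1) * rf (a + b) (n - 1) * rf (a + b + n + n) (m - n)
      = rf (a + b) m * rf (a + b + m) n := by
  have c1 : rf (a + b) ((n - 1) + (n + 1)) = rf (a + b) (n - 1) * rf ((a + b) + ((n - 1 : ℕ) : ℝ)) (n + 1) :=
    rf_add _ _ _
  have c2 : rf ((a + b) + ((n - 1 : ℕ) : ℝ)) (n + 1)
      = rf ((a + b) + ((n - 1 : ℕ) : ℝ)) n * (((a + b) + ((n - 1 : ℕ) : ℝ)) + n) := rf_succ _ _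
  have c3 : rf (a + b) ((n + n) + (m - n)) = rf (a + b) (n + n) * rf ((a + b) + ((n + n : ℕ) : ℝ)) (m - n) :=
    rf_add _ _ _
  have c4 : rf (a + b) (m + n) = rf (a + b) m * rf ((a + b) + (m : ℕ)) n := rf_add _ _ _
  have hc : ((n - 1 : ℕ) : ℝ) = (n : ℝ) - 1 := by
    rw [Nat.cast_sub h1]; norm_num
  rw [hc] at c1 c2
  rw [show (n - 1) + (n + 1) = n + n by omega] at c1
  rw [show (n + n) + (m - n) = m + n by omega] at c3
  have e1 : rf ((n : ℝ) + (a + b) - 1) n = rf ((a + b) + ((n : ℝ) - 1)) n := by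
    congr 1; ring
  have e2 : a + b + (n : ℝ) + n = (a + b) + ((n + n : ℕ) : ℝ) := by push_cast; ring
  have e3 : a + b + (m : ℝ) = (a + b) + (m : ℝ) := by ring
  rw [e1, e2, e3, ← c4, c3, c1, c2]
  have e4 : (a + b) + ((n : ℝ) - 1) + n = (a + b) + 2 * n - 1 := by push_cast; ring
  rw [e4]
  ring

lemma czeta_gval (a b : ℝ) (ha : 0 < a) (hb : 0 < b) (m n : ℕ) (hn : n ≤ m) :
    (ff m n / rf (a + b + m) n) * zeta a b n * gval a b m n = rf (a + b) m := by
  rcases Nat.eq_zero_or_pos n with h | h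
  · subst h
    rw [zeta, gval]
    simp [rf_zero, ff, Nat.descFactorial_zero]
  · rw [zeta, if_neg (by omega), gval]
    have k1 : ff m n ≠ 0 := (ff_pos hn).ne'
    have k2 : rf (a + b + m) n ≠ 0 := rf_ne_zero (by positivity) n
    have k3 : rf b n ≠ 0 := rf_ne_zero hb n
    have k4 : rf a n ≠ 0 := rf_ne_zero ha n
    have k5 : (n.factorial : ℝ) ≠ 0 := by positivity
    have key := keyid a b m n h hn
    field_simp
    linear_combination key

lemma dualOrth (a b : ℝ) (ha : 0 < a) (hb : 0 < b) (m i j : ℕ) (hi : i ≤ m) (hj : j ≤ m) :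
    ∑ n ∈ range (m + 1), (ff m n / rf (a + b + m) n) * zeta a b n * (rho a b m n i * rho a b m n j)
      = if i = j then rf (a + b) m * (m.choose i : ℝ) / (rf a i * rf b (m - i)) else 0 := by
  have hθ : (0 : ℝ) < rf (a + b) m := rf_pos (by positivity) m
  set A : Matrix (Fin (m + 1)) (Fin (m + 1)) ℝ := Matrix.of fun n i => rho a b m n i with hA
  set W : Matrix (Fin (m + 1)) (Fin (m + 1)) ℝ :=
    Matrix.diagonal (fun i : Fin (m + 1) =>
      rf a i * rf b (m - (i : ℕ)) / ((m.choose i : ℝ) * rf (a + b) m)) with hW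
  set D : Matrix (Fin (m + 1)) (Fin (m + 1)) ℝ :=
    Matrix.diagonal (fun n : Fin (m + 1) => (ff m n / rf (a + b + m) n) * zeta a b n) with hD
  have hG : A * W * A.transpose = Matrix.diagonal (fun n : Fin (m + 1) => gval a b m (n : ℕ) / rf (a + b) m) := by
    ext n n'
    rw [Matrix.mul_apply]
    simp only [hA, hW, Matrix.mul_diagonal, Matrix.transpose_apply, Matrix.of_apply]
    have : ∀ i : Fin (m + 1),
        rho a b m n i * (rf a i * rf b (m - (i : ℕ)) / ((m.choose i : ℝ) * rf (a + b) m)) * rho a b m n' i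
          = (rf a i * rf b (m - (i : ℕ)) / (m.choose i : ℝ) * (rho a b m n i * rho a b m n' i)) / rf (a + b) m := by
      intro i
      field_simp
    rw [Finset.sum_congr rfl fun i _ => this i]
    rw [← Finset.sum_div]
    rw [Fin.sum_univ_eq_sum_range (fun i =>
      rf a i * rf b (m - i) / (m.choose i : ℝ) * (rho a b m (n : ℕ) i * rho a b m (n' : ℕ) i)) (m + 1)]
    rw [gram_rho a b hb m (Nat.lt_succ_iff.mp n.isLt) (Nat.lt_succ_iff.mp n'.isLt)]
    rw [Matrix.diagonal_apply]
    by_cases h : n = n'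
    · rw [if_pos h, if_pos (by rw [h])]
    · rw [if_neg h, if_neg (fun hc => h (Fin.ext hc))]
      exact zero_div _
  have h1 : D * A * W * A.transpose = 1 := by
    have : D * A * W * A.transpose = D * (A * W * A.transpose) := by
      rw [Matrix.mul_assoc, Matrix.mul_assoc, Matrix.mul_assoc]
    rw [this, hG, hD, Matrix.diagonal_mul_diagonal]
    have : (fun n : Fin (m + 1) => (ff m n / rf (a + b + m) n) * zeta a b n * (gval a b m (n : ℕ) / rf (a + b) m))
        = fun _ => 1 := by
      funext n
      have hcz := czeta_gval a b ha hb m (n : ℕ) (Nat.lt_succ_iff.mp n.isLt)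
      rw [← mul_div_assoc, hcz, div_self hθ.ne']
    rw [this, Matrix.diagonal_one]
  have h2 : A.transpose * (D * A * W) = 1 := mul_eq_one_comm.mp h1
  have h3 : (A.transpose * D * A) * W = 1 := by
    simpa only [Matrix.mul_assoc] using h2
  have key : ∀ p q : Fin (m + 1), (A.transpose * D * A) p q
      * (rf a q * rf b (m - (q : ℕ)) / ((m.choose q : ℝ) * rf (a + b) m)) = if p = q then 1 else 0 := by
    intro p q
    have := congrFun (congrFun h3 p) q
    rw [Matrix.mul_diagonal] at this
    rw [this]
    rw [Matrix.one_apply]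
  have hADA : ∀ p q : Fin (m + 1), (A.transpose * D * A) p q
      = ∑ n ∈ range (m + 1), (ff m n / rf (a + b + m) n) * zeta a b n * (rho a b m n (p : ℕ) * rho a b m n (q : ℕ)) := by
    intro p q
    rw [Matrix.mul_apply]
    have e : ∀ n : Fin (m + 1), (A.transpose * D) p n * A n q
        = (ff m n / rf (a + b + m) n) * zeta a b n * (rho a b m n (p : ℕ) * rho a b m n (q : ℕ)) := by
      intro n
      rw [Matrix.mul_diagonal, Matrix.transpose_apply]
      simp only [hA, Matrix.of_apply]
      ring
    rw [Finset.sum_congr rfl fun n _ => e n]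
    exact Fin.sum_univ_eq_sum_range (fun n =>
      (ff m n / rf (a + b + m) n) * zeta a b n * (rho a b m n (p : ℕ) * rho a b m n (q : ℕ))) (m + 1)
  set p : Fin (m + 1) := ⟨i, by omega⟩ with hp
  set q : Fin (m + 1) := ⟨j, by omega⟩ with hq
  have hw : rf a (q : ℕ) * rf b (m - (q : ℕ)) / ((m.choose (q : ℕ) : ℝ) * rf (a + b) m) ≠ 0 := by
    have h1 : (0 : ℝ) < rf a (q : ℕ) := rf_pos ha _
    have h2 : (0 : ℝ) < rf b (m - (q : ℕ)) := rf_pos hb _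
    have h3 : (0 : ℝ) < (m.choose (q : ℕ) : ℝ) := by
      exact_mod_cast Nat.choose_pos (Nat.lt_succ_iff.mp q.isLt)
    positivity
  have hkey := key p q
  rw [hADA p q] at hkey
  have hpv : (p : ℕ) = i := rfl
  have hqv : (q : ℕ) = j := rfl
  rw [hpv, hqv] at hkey
  have h4 : (0 : ℝ) < rf a j := rf_pos ha j
  have h5 : (0 : ℝ) < rf b (m - j) := rf_pos hb (m - j)
  have h6 : (0 : ℝ) < (m.choose j : ℝ) := by exact_mod_cast Nat.choose_pos hj
  by_cases h : i = j
  · subst h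
    rw [if_pos rfl] at hkey ⊢
    set S := ∑ n ∈ range (m + 1),
      ff m n / rf (a + b + (m : ℝ)) n * zeta a b n * (rho a b m n i * rho a b m n i) with hS
    rw [eq_div_iff (by positivity : rf a i * rf b (m - i) ≠ 0)]
    field_simp at hkey
    linear_combination hkey
  · rw [if_neg h]
    rw [if_neg (fun hpq : p = q => h (by rw [← hpv, ← hqv, hpq]))] at hkey
    have hwne : rf a j * rf b (m - j) / ((m.choose j : ℝ) * rf (a + b) m) ≠ 0 := by positivity
    exact (mul_eq_zero.mp hkey).resolve_right hwne

lemma Rpoly_eq (a b : ℝ) (m n : ℕ) (hn : n ≤ m) (x : ℝ) :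
    Rpoly a b n x = ∑ i ∈ range (m + 1), rho a b m n i * (x ^ i * (1 - x) ^ (m - i)) := by
  have hbin : ∀ k, k ≤ m → (1 - x) ^ k
      = ∑ i ∈ range (m + 1), ((m - k).choose i : ℝ) * (x ^ i * (1 - x) ^ (m - i)) := by
    intro k hk
    have h1 : (1 - x) ^ k = (x + (1 - x)) ^ (m - k) * (1 - x) ^ k := by
      rw [show x + (1 - x) = 1 by ring, one_pow, one_mul]
    rw [h1, add_pow, sum_mul]
    have h2 : ∀ i ∈ range (m - k + 1),
        x ^ i * (1 - x) ^ (m - k - i) * ((m - k).choose i : ℝ) * (1 - x) ^ k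
          = ((m - k).choose i : ℝ) * (x ^ i * (1 - x) ^ (m - i)) := by
      intro i hi
      rw [mem_range] at hi
      rw [show m - i = (m - k - i) + k by omega, pow_add]
      ring
    rw [sum_congr rfl h2]
    refine Finset.sum_subset (by rw [range_subset_range]; omega) ?_
    intro i _ hi
    rw [mem_range, not_lt] at hi
    rw [Nat.choose_eq_zero_of_lt (by omega : m - k < i)]
    ring
  rw [Rpoly]
  have e : ∀ k ∈ range (n + 1),
      (-1 : ℝ) ^ k * (n.choose k : ℝ) * (rf ((n : ℝ) + (a + b) - 1) k / rf b k) * (1 - x) ^ k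
        = ∑ i ∈ range (m + 1),
            ((-1 : ℝ) ^ k * (n.choose k : ℝ) * (rf ((n : ℝ) + (a + b) - 1) k / rf b k) * ((m - k).choose i : ℝ))
              * (x ^ i * (1 - x) ^ (m - i)) := by
    intro k hk
    rw [mem_range] at hk
    rw [hbin k (by omega), mul_sum]
    exact sum_congr rfl fun i _ => by ring
  rw [sum_congr rfl e, sum_comm]
  refine sum_congr rfl fun i _ => ?_
  rw [rho, sum_mul]

/-- expansion of `ξ_m^{α,β}` in normalized Jacobi polynomials (`d = 2`). -/
theorem stmt_1 (a b : ℝ) (ha : 0 < a) (hb : 0 < b) (m : ℕ) (x y : ℝ) :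
    ∑ j ∈ Finset.range (m + 1),
        (m.choose j : ℝ) * (rf (a + b) m / (rf a j * rf b (m - j))) *
          (x * y) ^ j * ((1 - x) * (1 - y)) ^ (m - j) =
      ∑ n ∈ Finset.range (m + 1),
        (ff m n / rf ((a + b) + m) n) * zeta a b n * Rpoly a b n x * Rpoly a b n y := by
  have eR : ∀ n ∈ range (m + 1),
      (ff m n / rf ((a + b) + m) n) * zeta a b n * Rpoly a b n x * Rpoly a b n y
        = ∑ i ∈ range (m + 1), ∑ j ∈ range (m + 1),
            ((ff m n / rf (a + b + m) n) * zeta a b n * (rho a b m n i * rho a b m n j))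
              * ((x ^ i * (1 - x) ^ (m - i)) * (y ^ j * (1 - y) ^ (m - j))) := by
    intro n hn
    rw [mem_range] at hn
    rw [Rpoly_eq a b m n (by omega) x, Rpoly_eq a b m n (by omega) y,
      mul_assoc ((ff m n / rf (a + b + (m : ℝ)) n) * zeta a b n), Finset.sum_mul_sum, mul_sum]
    refine sum_congr rfl fun i _ => ?_
    rw [mul_sum]
    exact sum_congr rfl fun j _ => by ring
  rw [sum_congr rfl eR, sum_comm]
  have eI : ∀ i ∈ range (m + 1),
      ∑ n ∈ range (m + 1), ∑ j ∈ range (m + 1),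
          ((ff m n / rf (a + b + m) n) * zeta a b n * (rho a b m n i * rho a b m n j))
            * ((x ^ i * (1 - x) ^ (m - i)) * (y ^ j * (1 - y) ^ (m - j)))
        = (m.choose i : ℝ) * (rf (a + b) m / (rf a i * rf b (m - i)))
            * (x * y) ^ i * ((1 - x) * (1 - y)) ^ (m - i) := by
    intro i hi
    rw [mem_range] at hi
    rw [sum_comm]
    have eJ : ∀ j ∈ range (m + 1),
        ∑ n ∈ range (m + 1),
            ((ff m n / rf (a + b + m) n) * zeta a b n * (rho a b m n i * rho a b m n j))
              * ((x ^ i * (1 - x) ^ (m - i)) * (y ^ j * (1 - y) ^ (m - j)))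
          = (if i = j then rf (a + b) m * (m.choose i : ℝ) / (rf a i * rf b (m - i)) else 0)
              * ((x ^ i * (1 - x) ^ (m - i)) * (y ^ j * (1 - y) ^ (m - j))) := by
      intro j hj
      rw [mem_range] at hj
      rw [← sum_mul, dualOrth a b ha hb m i j (by omega) (by omega)]
    rw [sum_congr rfl eJ]
    have eS : ∀ j ∈ range (m + 1),
        (if i = j then rf (a + b) m * (m.choose i : ℝ) / (rf a i * rf b (m - i)) else 0)
            * ((x ^ i * (1 - x) ^ (m - i)) * (y ^ j * (1 - y) ^ (m - j)))
          = if i = j then (rf (a + b) m * (m.choose i : ℝ) / (rf a i * rf b (m - i)))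
              * ((x ^ i * (1 - x) ^ (m - i)) * (y ^ j * (1 - y) ^ (m - j))) else 0 := by
      intro j _
      split <;> ring
    rw [sum_congr rfl eS, Finset.sum_ite_eq (range (m + 1)) i, if_pos (mem_range.mpr (by omega))]
    rw [mul_pow, mul_pow]
    ring
  rw [sum_congr rfl eI]
end
end

section
/- Let d ≥ 2, α ∈ (0,∞)^d with θ := |α|, N ∈ ℕ, and r, s ∈ ℕ^d with |r| = |s| = N. Then for every 0 ≤ n ≤ N the Hahn polynomial kernel admits the second representation H^α_n(r,s) = (N_[n]/(θ+N)_(n)) Σ_{m=0}^n a^θ_{n,m} χ^{H,α}_m(r,s); equivalently, ((θ+N)_(n)/N_[n]) Σ_{m=0}^n a^θ_{n,m} ξ^{H,α}_m(r,s) = (N_[n]/(θ+N)_(n)) Σ_{m=0}^n a^θ_{n,m} χ^{H,α}_m(r,s). -/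
open MeasureTheory Finset

noncomputable section

namespace StmtAux


/-- real falling factorial -/
def ffR (x : ℝ) : ℕ → ℝ
  | 0 => 1
  | n + 1 => ffR x n * (x - n)

lemma rf_zero (a : ℝ) : rf a 0 = 1 := rfl
lemma rf_succ (a : ℝ) (n : ℕ) : rf a (n + 1) = rf a n * (a + n) := rfl
lemma ffR_zero (x : ℝ) : ffR x 0 = 1 := rfl
lemma ffR_succ (x : ℝ) (n : ℕ) : ffR x (n + 1) = ffR x n * (x - n) := rfl

lemma rf_add (a : ℝ) (m n : ℕ) : rf a (m + n) = rf a m * rf (a + m) n := by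
  induction n with
  | zero => simp [rf]
  | succ n ih => rw [← Nat.add_assoc, rf_succ, ih, rf_succ]; push_cast; ring

lemma rf_succ_left (a : ℝ) (n : ℕ) : rf a (n + 1) = a * rf (a + 1) n := by
  have := rf_add a 1 n
  simpa [rf, Nat.add_comm 1 n] using this

lemma rf_pos {a : ℝ} (ha : 0 < a) (n : ℕ) : 0 < rf a n := by
  induction n with
  | zero => norm_num [rf]
  | succ n ih => exact mul_pos ih (by positivity)

lemma rf_ne_zero {a : ℝ} (ha : 0 < a) (n : ℕ) : rf a n ≠ 0 := (rf_pos ha n).ne'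

lemma ffR_succ_left (x : ℝ) (n : ℕ) : ffR x (n + 1) = x * ffR (x - 1) n := by
  induction n with
  | zero => simp [ffR]
  | succ n ih => rw [ffR_succ, ih, ffR_succ]; push_cast; ring

lemma ffR_add (x : ℝ) (k w : ℕ) : ffR x (k + w) = ffR x k * ffR (x - k) w := by
  induction w with
  | zero => simp [ffR]
  | succ w ih => rw [← Nat.add_assoc, ffR_succ, ih, ffR_succ]; push_cast; ring

lemma ffR_nat (N : ℕ) : ∀ k : ℕ, (N.descFactorial k : ℝ) = ffR (N : ℝ) k := by
  intro k
  induction k with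
  | zero => simp [ffR]
  | succ k ih =>
    rw [Nat.descFactorial_succ, ffR_succ, ← ih]
    by_cases h : k ≤ N
    · push_cast [h]; ring
    · rw [Nat.descFactorial_eq_zero_iff_lt.2 (by omega)]
      push_cast
      rw [Nat.sub_eq_zero_of_le (by omega)]
      ring

lemma ff_eq_ffR (N k : ℕ) : ff N k = ffR (N : ℝ) k := ffR_nat N k

lemma ffR_eq_rf_neg (x : ℝ) (n : ℕ) : ffR x n = (-1 : ℝ) ^ n * rf (-x) n := by
  induction n with
  | zero => simp [ffR, rf]
  | succ n ih => rw [ffR_succ, ih, rf_succ, pow_succ]; ring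

lemma rf_eq_ffR_neg (x : ℝ) (n : ℕ) : rf x n = (-1 : ℝ) ^ n * ffR (-x) n := by
  rw [ffR_eq_rf_neg]; simp [← mul_assoc, ← mul_pow]

lemma ffR_rev (c : ℝ) (t : ℕ) : ffR c t = rf (c - t + 1) t := by
  induction t generalizing c with
  | zero => simp [ffR, rf]
  | succ t ih =>
    rw [ffR_succ_left, ih, rf_succ]
    push_cast
    ring_nf

lemma ffR_zero' (x : ℝ) : ffR x 0 = 1 := rfl
lemma rf_zero' (a : ℝ) : rf a 0 = 1 := rfl

/-- Generalized Vandermonde (E2): `∑_u C(v,u) x_[u] (a+u)_(l-u) = (a+x)_(v) (a+v)_(l-v)`. -/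
lemma E2 : ∀ (v : ℕ) (l : ℕ), v ≤ l → ∀ (x a : ℝ),
    ∑ u ∈ range (v + 1), (v.choose u : ℝ) * ffR x u * rf (a + u) (l - u)
      = rf (a + x) v * rf (a + v) (l - v) := by
  intro v
  induction v with
  | zero => intro l _ x a; simp [rf, ffR]
  | succ v ih =>
    intro l hvl x a
    rw [Finset.sum_range_succ']
    have key1 : ∀ i ∈ range (v + 1),
        (((v+1).choose (i+1) : ℝ)) * ffR x (i+1) * rf (a + ((i+1 : ℕ) : ℝ)) (l - (i+1))
          = x * ((v.choose i : ℝ) * ffR (x - 1) i * rf ((a + 1) + (i : ℝ)) ((l - 1) - i))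
            + ((v.choose (i+1) : ℝ)) * ffR x (i+1) * rf (a + ((i+1 : ℕ) : ℝ)) (l - (i+1)) := by
      intro i _
      have h2 : (l - (i + 1)) = (l - 1) - i := by omega
      have h3 : (a + ((i + 1 : ℕ) : ℝ)) = (a + 1) + (i : ℝ) := by push_cast; ring
      rw [Nat.choose_succ_succ, h2, h3, ffR_succ_left]
      push_cast
      ring
    rw [Finset.sum_congr rfl key1, Finset.sum_add_distrib]
    simp only [Nat.choose_zero_right, Nat.cast_one, one_mul, ffR_zero', Nat.cast_zero,
      add_zero, Nat.sub_zero, mul_one]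
    have hA : ∑ i ∈ range (v + 1),
        x * ((v.choose i : ℝ) * ffR (x - 1) i * rf ((a + 1) + (i : ℝ)) ((l - 1) - i))
        = x * (rf (a + x) v * rf ((a + 1) + (v:ℝ)) ((l-1) - v)) := by
      rw [← Finset.mul_sum, ih (l-1) (by omega) (x-1) (a+1)]
      ring_nf
    have hcomb := Finset.sum_range_succ'
      (fun u : ℕ => ((v.choose u : ℝ)) * ffR x u * rf (a + (u : ℝ)) (l - u)) (v+1)
    simp only [Nat.choose_zero_right, Nat.cast_one, one_mul, ffR_zero', Nat.cast_zero,
      add_zero, Nat.sub_zero, mul_one] at hcomb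
    have hB : (∑ i ∈ range (v + 1),
          ((v.choose (i+1) : ℝ)) * ffR x (i+1) * rf (a + ((i+1 : ℕ) : ℝ)) (l - (i+1)))
          + rf a l
        = rf (a + x) v * rf (a + (v:ℝ)) (l - v) := by
      rw [← hcomb, Finset.sum_range_succ, Nat.choose_succ_self]
      push_cast
      rw [ih l (by omega) x a]
      ring
    have e1 : rf (a + (v:ℝ)) (l - v) = (a + (v:ℝ)) * rf ((a+1) + (v:ℝ)) ((l-1) - v) := by
      have h : l - v = ((l-1) - v) + 1 := by omega
      rw [h, rf_succ_left]
      ring_nf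
    have e2 : rf (a + x) (v+1) = rf (a + x) v * (a + x + v) := rf_succ _ _
    have e3 : (l - (v+1)) = (l-1) - v := by omega
    have e4 : (a + ((v+1 : ℕ) : ℝ)) = (a+1) + (v:ℝ) := by push_cast; ring
    have final : x * (rf (a + x) v * rf ((a + 1) + (v:ℝ)) ((l-1) - v))
          + rf (a + x) v * rf (a + (v:ℝ)) (l - v)
        = rf (a + x) (v+1) * rf (a + ((v+1 : ℕ) : ℝ)) (l - (v+1)) := by
      rw [e1, e2, e3, e4]
      ring
    push_cast at final hB hA ⊢
    linear_combination hA + hB + final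

/-- Euler-transformation coefficient identity (≅ Pfaff–Saalschütz). -/
lemma E1 (l : ℕ) (x y a : ℝ) :
    rf (a + x) l * rf (a + y) l
      = ∑ k ∈ range (l + 1), (l.choose k : ℝ) * ffR x k * ffR y k
          * rf (a + x + y) (l - k) * rf (a + k) (l - k) := by
  have expand : ∀ k : ℕ, k ≤ l → rf (a + x + y) (l - k)
      = ∑ w ∈ range ((l - k) + 1),
          ((l - k).choose w : ℝ) * ffR (y - k) w * rf ((a + x + k) + w) (l - k - w) := by
    intro k _
    have h := E2 (l - k) (l - k) le_rfl (y - (k : ℝ)) (a + x + (k : ℝ))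
    have h1 : (a + x + (k:ℝ)) + (y - (k:ℝ)) = a + x + y := by ring
    rw [h1, Nat.sub_self, rf_zero', mul_one] at h
    exact h.symm
  have step1 : ∀ k ∈ range (l + 1),
      (l.choose k : ℝ) * ffR x k * ffR y k * rf (a + x + y) (l - k) * rf (a + k) (l - k)
        = ∑ w ∈ range ((l - k) + 1),
            ((l.choose k : ℝ) * ((l - k).choose w : ℝ) * ffR x k * ffR y (k + w)
              * rf ((a + x + k) + w) (l - k - w) * rf (a + k) (l - k)) := by
    intro k hk
    rw [expand k (Nat.lt_succ_iff.mp (mem_range.mp hk))]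
    simp only [Finset.mul_sum, Finset.sum_mul]
    refine Finset.sum_congr rfl fun w _ => ?_
    rw [ffR_add]
    ring
  rw [Finset.sum_congr rfl step1]
  -- triangle swap
  have swap : ∑ k ∈ range (l + 1), ∑ w ∈ range ((l - k) + 1),
        ((l.choose k : ℝ) * ((l - k).choose w : ℝ) * ffR x k * ffR y (k + w)
          * rf ((a + x + k) + w) (l - k - w) * rf (a + k) (l - k))
      = ∑ v ∈ range (l + 1), ∑ k ∈ range (v + 1),
        ((l.choose k : ℝ) * ((l - k).choose (v - k) : ℝ) * ffR x k * ffR y (k + (v - k))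
          * rf ((a + x + k) + ((v - k : ℕ) : ℝ)) (l - k - (v - k)) * rf (a + k) (l - k)) := by
    have inner : ∀ k ∈ range (l + 1), ∑ w ∈ range ((l - k) + 1),
          ((l.choose k : ℝ) * ((l - k).choose w : ℝ) * ffR x k * ffR y (k + w)
            * rf ((a + x + k) + w) (l - k - w) * rf (a + k) (l - k))
        = ∑ v ∈ Ico k (l + 1),
          ((l.choose k : ℝ) * ((l - k).choose (v - k) : ℝ) * ffR x k * ffR y (k + (v - k))
            * rf ((a + x + k) + ((v - k : ℕ) : ℝ)) (l - k - (v - k)) * rf (a + k) (l - k)) := by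
      intro k hk
      have hkl : k ≤ l := Nat.lt_succ_iff.mp (mem_range.mp hk)
      rw [Finset.sum_Ico_eq_sum_range]
      have hlen : l + 1 - k = (l - k) + 1 := by omega
      rw [hlen]
      refine Finset.sum_congr rfl fun i _ => ?_
      have h7 : k + i - k = i := by omega
      rw [h7]
    rw [Finset.sum_congr rfl inner]
    rw [Finset.range_eq_Ico, Finset.sum_Ico_Ico_comm]
    simp only [Finset.range_eq_Ico]
  rw [swap]
  have step2 : ∀ v ∈ range (l + 1), ∑ k ∈ range (v + 1),
        ((l.choose k : ℝ) * ((l - k).choose (v - k) : ℝ) * ffR x k * ffR y (k + (v - k))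
          * rf ((a + x + k) + ((v - k : ℕ) : ℝ)) (l - k - (v - k)) * rf (a + k) (l - k))
      = (l.choose v : ℝ) * ffR y v * rf (a + x + v) (l - v) * (rf (a + x) v * rf (a + v) (l - v)) := by
    intro v hv
    have hvl : v ≤ l := Nat.lt_succ_iff.mp (mem_range.mp hv)
    have per : ∀ k ∈ range (v + 1),
        ((l.choose k : ℝ) * ((l - k).choose (v - k) : ℝ) * ffR x k * ffR y (k + (v - k))
          * rf ((a + x + k) + ((v - k : ℕ) : ℝ)) (l - k - (v - k)) * rf (a + k) (l - k))
        = ((l.choose v : ℝ) * ffR y v * rf (a + x + v) (l - v))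
            * ((v.choose k : ℝ) * ffR x k * rf (a + k) (l - k)) := by
      intro k hk
      have hkv : k ≤ v := Nat.lt_succ_iff.mp (mem_range.mp hk)
      have h1 : k + (v - k) = v := by omega
      have h2 : ((a + x + (k:ℝ)) + ((v - k : ℕ) : ℝ)) = a + x + (v:ℝ) := by
        have hc : ((v - k : ℕ) : ℝ) = (v : ℝ) - (k : ℝ) := by
          push_cast [Nat.cast_sub hkv]; ring
        rw [hc]; ring
      have h3 : l - k - (v - k) = l - v := by omega
      have h4 : (l.choose k : ℝ) * ((l - k).choose (v - k) : ℝ)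
          = (l.choose v : ℝ) * (v.choose k : ℝ) := by
        rw [← Nat.cast_mul, ← Nat.cast_mul, Nat.choose_mul (n := l) hkv]
      rw [h1, h2, h3]
      linear_combination (ffR x k * ffR y v * rf (a + x + (v:ℝ)) (l - v) * rf (a + (k:ℝ)) (l - k)) * h4
    rw [Finset.sum_congr rfl per, ← Finset.mul_sum, E2 v l hvl x a]
  rw [Finset.sum_congr rfl step2]
  have step3 : ∀ v ∈ range (l + 1),
      (l.choose v : ℝ) * ffR y v * rf (a + x + v) (l - v) * (rf (a + x) v * rf (a + v) (l - v))
        = rf (a + x) l * ((l.choose v : ℝ) * ffR y v * rf (a + v) (l - v)) := by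
    intro v hv
    have hvl : v ≤ l := Nat.lt_succ_iff.mp (mem_range.mp hv)
    have h5 : rf (a + x) (v + (l - v)) = rf (a + x) v * rf ((a + x) + v) (l - v) := rf_add _ _ _
    have h6 : v + (l - v) = l := by omega
    rw [h6] at h5
    rw [h5]
    ring
  rw [Finset.sum_congr rfl step3, ← Finset.mul_sum, E2 l l le_rfl y a, Nat.sub_self, rf_zero',
    mul_one]

/-- Multivariate Chu–Vandermonde. -/
lemma Vm (d : ℕ) (β : Fin d → ℝ) : ∀ p : ℕ,
    ∑ l ∈ Finset.Nat.antidiagonalTuple d p, ∏ i, (rf (β i) (l i) / (l i).factorial)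
      = rf (∑ i, β i) p / p.factorial := by
  intro p
  induction p with
  | zero =>
    rw [Finset.Nat.antidiagonalTuple_zero_right, Finset.sum_singleton]
    simp [rf_zero']
  | succ p ih =>
    have key : ((p : ℝ) + 1) * ∑ l ∈ Finset.Nat.antidiagonalTuple d (p+1),
          ∏ i, (rf (β i) (l i) / (l i).factorial)
        = ((∑ i, β i) + p) * ∑ l ∈ Finset.Nat.antidiagonalTuple d p,
          ∏ i, (rf (β i) (l i) / (l i).factorial) := by
      rw [Finset.mul_sum]
      have h1 : ∀ l ∈ Finset.Nat.antidiagonalTuple d (p+1),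
          ((p : ℝ) + 1) * ∏ i, (rf (β i) (l i) / (l i).factorial)
            = ∑ i, ((l i : ℝ) * ∏ j, (rf (β j) (l j) / (l j).factorial)) := by
        intro l hl
        rw [← Finset.sum_mul]
        have hm := Finset.Nat.mem_antidiagonalTuple.mp hl
        have hc : (∑ i, (l i : ℝ)) = (p : ℝ) + 1 := by
          rw [← Nat.cast_sum, hm]; push_cast; ring
        rw [hc]
      rw [Finset.sum_congr rfl h1, ← Finset.sum_product']
      have h2 : ∀ l' ∈ Finset.Nat.antidiagonalTuple d p,
          ((∑ i, β i) + p) * ∏ i, (rf (β i) (l' i) / (l' i).factorial)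
            = ∑ i, ((∏ j, (rf (β j) (l' j) / (l' j).factorial)) * (β i + (l' i : ℝ))) := by
        intro l' hl'
        rw [← Finset.mul_sum]
        have hm := Finset.Nat.mem_antidiagonalTuple.mp hl'
        have : ∑ i, (β i + (l' i : ℝ)) = (∑ i, β i) + p := by
          rw [Finset.sum_add_distrib, ← Nat.cast_sum, hm]
        rw [this]
        ring
      conv_rhs => rw [Finset.mul_sum]
      rw [Finset.sum_congr rfl h2, ← Finset.sum_product']
      -- now a bijection between pairs
      rw [← Finset.sum_filter_of_ne
        (p := fun q : (Fin d → ℕ) × (Fin d) => q.1 q.2 ≠ 0)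
        (by intro q _ hq; intro h0; apply hq; rw [h0]; push_cast; ring)]
      refine Finset.sum_nbij'
        (fun q => (Function.update q.1 q.2 (q.1 q.2 - 1), q.2))
        (fun q => (Function.update q.1 q.2 (q.1 q.2 + 1), q.2)) ?_ ?_ ?_ ?_ ?_
      · rintro ⟨l, i⟩ hq
        simp only [Finset.mem_filter, Finset.mem_product, Finset.Nat.mem_antidiagonalTuple] at hq ⊢
        obtain ⟨⟨hsum, -⟩, hne⟩ := hq
        refine ⟨?_, Finset.mem_univ _⟩
        have hupd := Finset.sum_update_of_mem (Finset.mem_univ i) l (l i - 1)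
        rw [hupd]
        have hsum2 : l i + ∑ x ∈ Finset.univ \ {i}, l x = p + 1 := by
          rw [← hsum]
          have := Finset.sum_update_of_mem (Finset.mem_univ i) l (l i)
          rw [Function.update_eq_self] at this
          rw [this]
        omega
      · rintro ⟨l, i⟩ hq
        simp only [Finset.mem_filter, Finset.mem_product, Finset.Nat.mem_antidiagonalTuple] at hq ⊢
        obtain ⟨hsum, -⟩ := hq
        refine ⟨⟨?_, Finset.mem_univ _⟩, ?_⟩
        · have hupd := Finset.sum_update_of_mem (Finset.mem_univ i) l (l i + 1)
          rw [hupd]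
          have hsum2 : l i + ∑ x ∈ Finset.univ \ {i}, l x = p := by
            rw [← hsum]
            have := Finset.sum_update_of_mem (Finset.mem_univ i) l (l i)
            rw [Function.update_eq_self] at this
            rw [this]
          omega
        · simp [Function.update_self]
      · rintro ⟨l, i⟩ hq
        simp only [Finset.mem_filter, Finset.mem_product] at hq
        obtain ⟨-, hne⟩ := hq
        simp only [Prod.mk.injEq]
        constructor
        · funext j
          by_cases hj : j = i
          · subst hj; simp [Function.update_self]; omega
          · simp [Function.update_of_ne hj]
        · trivial
      · rintro ⟨l, i⟩ _
        simp only [Prod.mk.injEq]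
        constructor
        · funext j
          by_cases hj : j = i
          · subst hj; simp [Function.update_self]
          · simp [Function.update_of_ne hj]
        · trivial
      · rintro ⟨l, i⟩ hq
        simp only [Finset.mem_filter, Finset.mem_product] at hq
        obtain ⟨-, hne⟩ := hq
        obtain ⟨c, hc⟩ := Nat.exists_eq_succ_of_ne_zero hne
        -- value transport
        have hprod : ∏ j, (rf (β j) (l j) / (l j).factorial)
            = (rf (β i) (l i) / (l i).factorial)
              * ∏ j ∈ Finset.univ.erase i, (rf (β j) (l j) / (l j).factorial) :=
          (Finset.mul_prod_erase _ _ (Finset.mem_univ i)).symm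
        have hprod2 : ∏ j, (rf (β j) ((Function.update l i (l i - 1)) j)
              / ((Function.update l i (l i - 1)) j).factorial)
            = (rf (β i) (l i - 1) / (l i - 1).factorial)
              * ∏ j ∈ Finset.univ.erase i, (rf (β j) (l j) / (l j).factorial) := by
          rw [← Finset.mul_prod_erase _ _ (Finset.mem_univ i), Function.update_self]
          congr 1
          refine Finset.prod_congr rfl fun j hj => ?_
          rw [Function.update_of_ne (Finset.ne_of_mem_erase hj)]
        simp only [hprod, hprod2, Function.update_self]
        have hfac : ((c + 1).factorial : ℝ) = ((c:ℝ) + 1) * (c.factorial : ℝ) := by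
          push_cast [Nat.factorial_succ]; ring
        have hrf : rf (β i) (c + 1) = rf (β i) c * (β i + c) := rf_succ _ _
        have hcf : (c.factorial : ℝ) ≠ 0 := Nat.cast_ne_zero.mpr (Nat.factorial_ne_zero c)
        rw [hc]
        simp only [Nat.succ_sub_one, Nat.succ_eq_add_one]
        rw [hrf, hfac]
        push_cast
        field_simp
    -- conclude
    have hp1 : ((p : ℝ) + 1) ≠ 0 := by positivity
    have := key
    rw [ih] at this
    have hfac : ((p+1).factorial : ℝ) = ((p:ℝ) + 1) * (p.factorial : ℝ) := by
      push_cast [Nat.factorial_succ]; ring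
    have hrf : rf (∑ i, β i) (p + 1) = rf (∑ i, β i) p * ((∑ i, β i) + p) := rf_succ _ _
    have hpf : (p.factorial : ℝ) ≠ 0 := Nat.cast_ne_zero.mpr (Nat.factorial_ne_zero p)
    field_simp [hfac, hrf] at this ⊢
    rw [hfac, hrf]; linear_combination this


lemma E1div (a x y : ℝ) (ha : 0 < a) (l : ℕ) :
    ∑ k ∈ range (l+1), (ffR x k * ffR y k / (rf a k * k.factorial))
        * (rf (a + x + y) (l - k) / (l - k).factorial)
      = rf (a + x) l * rf (a + y) l / (rf a l * l.factorial) := by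
  have hden : rf a l * (l.factorial : ℝ) ≠ 0 := by
    have := rf_pos ha l
    have := Nat.factorial_pos l
    positivity
  rw [eq_div_iff hden] at *
  rw [Finset.sum_mul, E1 l x y a]
  refine Finset.sum_congr rfl fun k hk => ?_
  have hkl : k ≤ l := Nat.lt_succ_iff.mp (mem_range.mp hk)
  have hsplit : rf a l = rf a k * rf (a + k) (l - k) := by
    have h := rf_add a k (l - k)
    have h2 : k + (l - k) = l := by omega
    rw [h2] at h
    exact h
  have hch : (l.choose k : ℝ) = (l.factorial : ℝ) / ((k.factorial : ℝ) * ((l-k).factorial : ℝ)) :=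
    Nat.cast_choose ℝ hkl
  have h1 : (rf a k) ≠ 0 := rf_ne_zero ha k
  have h2 : ((k.factorial : ℝ)) ≠ 0 := Nat.cast_ne_zero.mpr (Nat.factorial_ne_zero k)
  have h3 : (((l-k).factorial : ℝ)) ≠ 0 := Nat.cast_ne_zero.mpr (Nat.factorial_ne_zero _)
  rw [hsplit, hch]
  field_simp

lemma sum_adt_eq {d m : ℕ} (F : (Fin d → ℕ) → ℝ) :
    ∑ l ∈ Finset.Nat.antidiagonalTuple d m, F l
      = ∑ f ∈ Finset.finsuppAntidiag (Finset.univ : Finset (Fin d)) m, F ⇑f := by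
  refine Finset.sum_nbij' (fun l => Finsupp.equivFunOnFinite.symm l) (fun f => ⇑f)
    ?_ ?_ ?_ ?_ ?_
  · intro l hl
    rw [Finset.mem_finsuppAntidiag]
    refine ⟨?_, Finset.subset_univ _⟩
    have := Finset.Nat.mem_antidiagonalTuple.mp hl
    simpa using this
  · intro f hf
    rw [Finset.mem_finsuppAntidiag] at hf
    rw [Finset.Nat.mem_antidiagonalTuple]
    exact hf.1
  · intro l _
    funext j
    simp [Finsupp.equivFunOnFinite_symm_apply_apply]
  · intro f _
    simp
  · intro l _
    have h : ⇑(Finsupp.equivFunOnFinite.symm l) = l := by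
      funext j; simp [Finsupp.equivFunOnFinite_symm_apply_apply]
    rw [h]

/-- connection coefficients -/
def Tc (θ : ℝ) (N m K : ℕ) : ℝ :=
  (m.choose K : ℝ) * rf θ m * (ff N K)^2 * rf (θ + 2*N) (m - K)
    / (rf (θ + N) m ^ 2 * rf θ K)

lemma lemma2 {d : ℕ} (α : Fin d → ℝ) (hα : ∀ i, 0 < α i) (hθ : 0 < ∑ i, α i)
    (N : ℕ) (r s : Fin d → ℕ) (hr : ∑ i, r i = N) (hs : ∑ i, s i = N)
    (m : ℕ) (hm : m ≤ N) :
    xiH α m r s = ∑ K ∈ Finset.range (m+1), Tc (∑ i, α i) N m K * chiH α N K r s := by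
  classical
  set θ := ∑ i, α i with hθdef
  have hθN : (0:ℝ) < θ + N := by positivity
  have hsum_ar : (∑ i, (α i + ((r i : ℕ) : ℝ))) = θ + N := by
    rw [Finset.sum_add_distrib, ← Nat.cast_sum, hr]
  have hsum_as : (∑ i, (α i + ((s i : ℕ) : ℝ))) = θ + N := by
    rw [Finset.sum_add_distrib, ← Nat.cast_sum, hs]
  have hsum_ars : (∑ i, (α i + (r i : ℝ) + (s i : ℝ))) = θ + 2*N := by
    rw [Finset.sum_add_distrib, Finset.sum_add_distrib, ← Nat.cast_sum, ← Nat.cast_sum, hr, hs]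
    ring
  -- step 1 : rewrite xiH
  have step1 : xiH α m r s
      = rf θ m * m.factorial / rf (θ + N) m ^ 2 *
        ∑ l ∈ Finset.Nat.antidiagonalTuple d m,
          ∏ i, (rf (α i + r i) (l i) * rf (α i + s i) (l i)
            / (rf (α i) (l i) * (l i).factorial)) := by
    rw [Finset.mul_sum]
    refine Finset.sum_congr rfl fun l hl => ?_
    simp only [DM]
    rw [hsum_ar, hsum_as]
    have hP : (0:ℝ) < ∏ i, ((l i).factorial : ℝ) := by
      apply Finset.prod_pos
      intro i _
      exact_mod_cast Nat.factorial_pos _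
    have hQ : (0:ℝ) < ∏ i, rf (α i) (l i) := by
      apply Finset.prod_pos
      intro i _
      exact rf_pos (hα i) _
    have hsplit : ∏ i, (rf (α i + r i) (l i) * rf (α i + s i) (l i)
          / (rf (α i) (l i) * (l i).factorial))
        = ((∏ i, rf (α i + r i) (l i)) * (∏ i, rf (α i + s i) (l i)))
          / ((∏ i, rf (α i) (l i)) * (∏ i, ((l i).factorial : ℝ))) := by
      rw [← Finset.prod_mul_distrib, ← Finset.prod_mul_distrib, ← Finset.prod_div_distrib]
    rw [hsplit]
    have hfm : ((m.factorial : ℝ)) ≠ 0 := Nat.cast_ne_zero.mpr (Nat.factorial_ne_zero m)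
    have h1 : rf (θ + N) m ≠ 0 := rf_ne_zero hθN m
    have h2 : rf θ m ≠ 0 := rf_ne_zero hθ m
    field_simp
    ring
  -- power series
  set U : Fin d → PowerSeries ℝ := fun i =>
    PowerSeries.mk fun k => ff (r i) k * ff (s i) k / (rf (α i) k * k.factorial) with hU
  set W : Fin d → PowerSeries ℝ := fun i =>
    PowerSeries.mk fun w => rf (α i + r i + s i) w / w.factorial with hW
  have hUW : ∀ (i : Fin d) (c : ℕ), PowerSeries.coeff c (U i * W i)
      = rf (α i + r i) c * rf (α i + s i) c / (rf (α i) c * c.factorial) := by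
    intro i c
    rw [PowerSeries.coeff_mul, Finset.Nat.sum_antidiagonal_eq_sum_range_succ_mk]
    simp only [hU, hW, PowerSeries.coeff_mk]
    have h := E1div (α i) (r i) (s i) (hα i) c
    simp only [← ff_eq_ffR] at h
    exact h
  have hprodW : ∀ q : ℕ, PowerSeries.coeff q (∏ i, W i) = rf (θ + 2*N) q / q.factorial := by
    intro q
    rw [PowerSeries.coeff_prod, ← sum_adt_eq fun l => ∏ i, PowerSeries.coeff (l i) (W i)]
    simp only [hW, PowerSeries.coeff_mk]
    rw [Vm d (fun i => α i + r i + s i) q, hsum_ars]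
  have hprodU : ∀ q : ℕ, PowerSeries.coeff q (∏ i, U i)
      = ∑ l ∈ Finset.Nat.antidiagonalTuple d q,
          ∏ i, (ff (r i) (l i) * ff (s i) (l i) / (rf (α i) (l i) * (l i).factorial)) := by
    intro q
    rw [PowerSeries.coeff_prod, ← sum_adt_eq fun l => ∏ i, PowerSeries.coeff (l i) (U i)]
    simp only [hU, PowerSeries.coeff_mk]
  have step2 : ∑ l ∈ Finset.Nat.antidiagonalTuple d m,
        ∏ i, (rf (α i + r i) (l i) * rf (α i + s i) (l i)
          / (rf (α i) (l i) * (l i).factorial))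
      = ∑ K ∈ Finset.range (m+1),
          (∑ l ∈ Finset.Nat.antidiagonalTuple d K,
            ∏ i, (ff (r i) (l i) * ff (s i) (l i) / (rf (α i) (l i) * (l i).factorial)))
          * (rf (θ + 2*N) (m - K) / (m - K).factorial) := by
    have e1 : ∑ l ∈ Finset.Nat.antidiagonalTuple d m,
          ∏ i, (rf (α i + r i) (l i) * rf (α i + s i) (l i)
            / (rf (α i) (l i) * (l i).factorial))
        = PowerSeries.coeff m (∏ i, (U i * W i)) := by
      rw [PowerSeries.coeff_prod, ← sum_adt_eq fun l => ∏ i, PowerSeries.coeff (l i) (U i * W i)]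
      refine Finset.sum_congr rfl fun l _ => Finset.prod_congr rfl fun i _ => (hUW i (l i)).symm
    rw [e1, Finset.prod_mul_distrib, PowerSeries.coeff_mul,
      Finset.Nat.sum_antidiagonal_eq_sum_range_succ_mk]
    refine Finset.sum_congr rfl fun K _ => ?_
    rw [hprodU K, hprodW (m - K)]
  -- step 3 : chiH in terms of S2
  have step3 : ∀ K : ℕ, K ≤ N → chiH α N K r s
      = rf θ K * K.factorial / (ff N K)^2 *
        ∑ l ∈ Finset.Nat.antidiagonalTuple d K,
          ∏ i, (ff (r i) (l i) * ff (s i) (l i) / (rf (α i) (l i) * (l i).factorial)) := by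
    intro K hK
    simp only [chiH, DM]
    rw [Finset.mul_sum]
    refine Finset.sum_congr rfl fun l hl => ?_
    have hP : (0:ℝ) < ∏ i, ((l i).factorial : ℝ) := by
      apply Finset.prod_pos; intro i _; exact_mod_cast Nat.factorial_pos _
    have hQ : (0:ℝ) < ∏ i, rf (α i) (l i) := by
      apply Finset.prod_pos; intro i _; exact rf_pos (hα i) _
    have hffN : ff N K ≠ 0 := by
      have h0 : N.descFactorial K ≠ 0 := by
        rw [Ne, Nat.descFactorial_eq_zero_iff_lt]; omega
      simp only [ff]
      exact_mod_cast h0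
    have hsplit : ∏ i, (ff (r i) (l i) * ff (s i) (l i) / (rf (α i) (l i) * (l i).factorial))
        = ((∏ i, ff (r i) (l i)) * (∏ i, ff (s i) (l i)))
          / ((∏ i, rf (α i) (l i)) * (∏ i, ((l i).factorial : ℝ))) := by
      rw [← Finset.prod_mul_distrib, ← Finset.prod_mul_distrib, ← Finset.prod_div_distrib]
    rw [hsplit]
    have hfK : ((K.factorial : ℝ)) ≠ 0 := Nat.cast_ne_zero.mpr (Nat.factorial_ne_zero K)
    have h2 : rf θ K ≠ 0 := rf_ne_zero hθ K
    simp only [ff] at *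
    field_simp
    ring
  -- assemble
  rw [step1, step2, Finset.mul_sum]
  refine Finset.sum_congr rfl fun K hK => ?_
  have hKm : K ≤ m := Nat.lt_succ_iff.mp (mem_range.mp hK)
  rw [step3 K (le_trans hKm hm)]
  have hffN : ff N K ≠ 0 := by
    have hKN : K ≤ N := le_trans hKm hm
    have h0 : N.descFactorial K ≠ 0 := by
      rw [Ne, Nat.descFactorial_eq_zero_iff_lt]; omega
    simp only [ff]
    exact_mod_cast h0
  have hch : (m.choose K : ℝ)
      = (m.factorial : ℝ) / ((K.factorial : ℝ) * ((m-K).factorial : ℝ)) :=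
    Nat.cast_choose ℝ hKm
  simp only [Tc]
  rw [hch]
  have h1 : rf (θ + N) m ≠ 0 := rf_ne_zero hθN m
  have h2 : rf θ K ≠ 0 := rf_ne_zero hθ K
  have h3 : ((K.factorial : ℝ)) ≠ 0 := Nat.cast_ne_zero.mpr (Nat.factorial_ne_zero K)
  have h4 : (((m-K).factorial : ℝ)) ≠ 0 := Nat.cast_ne_zero.mpr (Nat.factorial_ne_zero _)
  field_simp

/-- E1 instance: terminating Saalschütz-type summation. -/
lemma dagger (θ Nr : ℝ) (n K : ℕ) (h : K ≤ n) :
    ∑ j ∈ range ((n-K)+1),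
        ((-1:ℝ))^(n-K-j) * ((n-K).choose j : ℝ) * rf (θ + n + K - 1) j * rf (θ + 2*Nr) j
          * (rf (θ + Nr + K + j) (n-K-j))^2
      = ((-1:ℝ))^(n-K) * (ffR (Nr - K) (n-K))^2 := by
  have hE := E1 (n-K) (1 - θ - (n:ℝ) - (K:ℝ)) (-(θ + 2*Nr)) (θ + Nr + (K:ℝ))
  have hax : θ + Nr + (K:ℝ) + (1 - θ - (n:ℝ) - (K:ℝ)) = Nr - (K:ℝ) - ((n-K : ℕ):ℝ) + 1 := by
    push_cast [Nat.cast_sub h]; ring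
  have hay : θ + Nr + (K:ℝ) + (-(θ + 2*Nr)) = (K:ℝ) - Nr := by ring
  have hterm : ∀ j ∈ range ((n-K)+1),
      ((n-K).choose j : ℝ) * ffR (1 - θ - (n:ℝ) - (K:ℝ)) j * ffR (-(θ + 2*Nr)) j
          * rf (θ + Nr + (K:ℝ) + (1 - θ - (n:ℝ) - (K:ℝ)) + (-(θ + 2*Nr))) (n-K-j)
          * rf (θ + Nr + (K:ℝ) + (j:ℝ)) (n-K-j)
        = ((-1:ℝ))^(n-K-j) * ((n-K).choose j : ℝ) * rf (θ + n + K - 1) j * rf (θ + 2*Nr) j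
          * (rf (θ + Nr + K + j) (n-K-j))^2 := by
    intro j hj
    have hjn : j ≤ n - K := Nat.lt_succ_iff.mp (mem_range.mp hj)
    rw [ffR_eq_rf_neg (1 - θ - (n:ℝ) - (K:ℝ)) j, ffR_eq_rf_neg (-(θ + 2*Nr)) j]
    rw [show (-(1 - θ - (n:ℝ) - (K:ℝ))) = θ + (n:ℝ) + (K:ℝ) - 1 from by ring]
    rw [show (- -(θ + 2*Nr)) = θ + 2*Nr from by ring]
    rw [show (θ + Nr + (K:ℝ) + (1 - θ - (n:ℝ) - (K:ℝ)) + (-(θ + 2*Nr)))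
        = 1 - (n:ℝ) - θ - Nr from by ring]
    rw [rf_eq_ffR_neg (1 - (n:ℝ) - θ - Nr) (n-K-j)]
    rw [show (-(1 - (n:ℝ) - θ - Nr)) = θ + Nr + (n:ℝ) - 1 from by ring]
    rw [ffR_rev]
    rw [show (θ + Nr + (n:ℝ) - 1 - ((n-K-j : ℕ):ℝ) + 1) = θ + Nr + (K:ℝ) + (j:ℝ) from by
      push_cast [Nat.cast_sub hjn, Nat.cast_sub h]
      ring]
    have hsq : ((-1:ℝ))^j * ((-1:ℝ))^j = 1 := by
      rw [← pow_add, show j + j = 2*j from by ring, pow_mul]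
      norm_num
    linear_combination (((n-K).choose j : ℝ) * rf (θ + (n:ℝ) + (K:ℝ) - 1) j * rf (θ + 2*Nr) j
      * ((-1:ℝ))^(n-K-j) * (rf (θ + Nr + (K:ℝ) + (j:ℝ)) (n-K-j))^2) * hsq
  rw [Finset.sum_congr rfl hterm] at hE
  rw [hax, hay, ← ffR_rev, rf_eq_ffR_neg ((K:ℝ) - Nr)] at hE
  rw [show (-((K:ℝ) - Nr)) = Nr - (K:ℝ) from by ring] at hE
  rw [← hE]
  ring

/-- the key scalar summation identity -/
lemma L3 (θ : ℝ) (hθ : 0 < θ) (N n K : ℕ) (hKn : K ≤ n) (hnN : n ≤ N) :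
    ∑ m ∈ Finset.Ico K (n+1), acoef θ n m * Tc θ N m K
      = (ff N n / rf (θ + N) n)^2 * acoef θ n K := by
  have hθN : (0:ℝ) < θ + N := by positivity
  have hffNK : (0:ℝ) < ff N K := by
    have h0 : N.descFactorial K ≠ 0 := by
      rw [Ne, Nat.descFactorial_eq_zero_iff_lt]; omega
    simp only [ff]
    exact_mod_cast Nat.pos_of_ne_zero h0
  rcases Nat.eq_zero_or_pos n with hn0 | hn0
  · subst hn0
    have hK0 : K = 0 := by omega
    subst hK0
    rw [Finset.sum_Ico_eq_sum_range]
    simp [acoef, Tc, rf_zero']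
  -- n ≥ 1
  have hne : n ≠ 0 := by omega
  rw [Finset.sum_Ico_eq_sum_range]
  rw [show n + 1 - K = (n - K) + 1 from by omega]
  set Cst : ℝ := (θ + 2*n - 1) * rf (θ + K) (n-1) * (ff N K)^2
      / ((K.factorial : ℝ) * ((n-K).factorial : ℝ) * rf (θ + N) n ^ 2) with hCst
  have hterm : ∀ j ∈ range ((n-K)+1),
      acoef θ n (K + j) * Tc θ N (K + j) K
        = Cst * (((-1:ℝ))^(n-K-j) * ((n-K).choose j : ℝ) * rf (θ + n + K - 1) j
            * rf (θ + 2*(N:ℝ)) j * (rf (θ + (N:ℝ) + K + j) (n-K-j))^2) := by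
    intro j hj
    have hjn : j ≤ n - K := Nat.lt_succ_iff.mp (mem_range.mp hj)
    have hKjn : K + j ≤ n := by omega
    simp only [acoef, Tc, if_neg hne]
    rw [show n - (K + j) = n - K - j from by omega]
    rw [show (K + j) - K = j from by omega]
    -- relation A
    have hA : rf θ (K + j) * rf (θ + ((K + j : ℕ) : ℝ)) (n-1)
        = rf θ K * rf (θ + (K:ℝ)) (n-1) * rf (θ + (n:ℝ) + (K:ℝ) - 1) j := by
      have a1 : rf θ (K + j) = rf θ K * rf (θ + (K:ℝ)) j := rf_add θ K j
      have a2 : rf (θ + (K:ℝ)) (j + (n-1)) = rf (θ + (K:ℝ)) j * rf (θ + (K:ℝ) + (j:ℝ)) (n-1) :=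
        rf_add (θ + (K:ℝ)) j (n-1)
      have a3 : rf (θ + (K:ℝ)) ((n-1) + j)
          = rf (θ + (K:ℝ)) (n-1) * rf (θ + (K:ℝ) + ((n-1 : ℕ):ℝ)) j :=
        rf_add (θ + (K:ℝ)) (n-1) j
      have a4 : (θ + ((K + j : ℕ) : ℝ)) = θ + (K:ℝ) + (j:ℝ) := by push_cast; ring
      have a5 : (θ + (K:ℝ) + ((n-1 : ℕ):ℝ)) = θ + (n:ℝ) + (K:ℝ) - 1 := by
        push_cast [Nat.cast_sub (by omega : 1 ≤ n)]; ring
      have a6 : j + (n-1) = (n-1) + j := by omega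
      rw [a6, a3, a5] at a2
      rw [a4, a1]
      linear_combination rf θ K * a2.symm
    have hA' : rf (θ + ((K + j : ℕ) : ℝ)) (n-1)
        = rf θ K * rf (θ + (K:ℝ)) (n-1) * rf (θ + (n:ℝ) + (K:ℝ) - 1) j / rf θ (K + j) := by
      rw [eq_div_iff (rf_ne_zero hθ _)]
      linear_combination hA
    have hB : rf (θ + (N:ℝ)) n
        = rf (θ + (N:ℝ)) (K + j) * rf (θ + (N:ℝ) + (K:ℝ) + (j:ℝ)) (n-K-j) := by
      have b1 := rf_add (θ + (N:ℝ)) (K + j) (n-K-j)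
      rw [show (K + j) + (n-K-j) = n from by omega] at b1
      rw [show (θ + (N:ℝ) + ((K+j : ℕ):ℝ)) = θ + (N:ℝ) + (K:ℝ) + (j:ℝ) from by push_cast; ring] at b1
      exact b1
    have hB' : rf (θ + (N:ℝ)) (K + j)
        = rf (θ + (N:ℝ)) n / rf (θ + (N:ℝ) + (K:ℝ) + (j:ℝ)) (n-K-j) := by
      rw [eq_div_iff (rf_ne_zero (by positivity) _)]
      linear_combination -hB
    have hC : ((K+j).choose K : ℝ) = ((K+j).factorial : ℝ) / ((K.factorial : ℝ) * (j.factorial : ℝ)) := by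
      have h := Nat.cast_choose ℝ (Nat.le_add_right K j)
      rw [show K + j - K = j from by omega] at h
      exact h
    have hD : ((n-K).choose j : ℝ)
        = ((n-K).factorial : ℝ) / ((j.factorial : ℝ) * ((n-K-j).factorial : ℝ)) :=
      Nat.cast_choose ℝ hjn
    rw [hA', hB', hC, hD, hCst]
    have hrfne2 : rf (θ + (N:ℝ)) n ≠ 0 := rf_ne_zero hθN _
    have hrf3 : rf (θ + (N:ℝ) + (K:ℝ) + (j:ℝ)) (n-K-j) ≠ 0 := rf_ne_zero (by positivity) _
    have hrfθK : rf θ K ≠ 0 := rf_ne_zero hθ _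
    have hrfθKj : rf θ (K + j) ≠ 0 := rf_ne_zero hθ _
    have hf1 : ((K.factorial : ℝ)) ≠ 0 := Nat.cast_ne_zero.mpr (Nat.factorial_ne_zero K)
    have hf2 : ((j.factorial : ℝ)) ≠ 0 := Nat.cast_ne_zero.mpr (Nat.factorial_ne_zero j)
    have hf3 : (((n-K-j).factorial : ℝ)) ≠ 0 := Nat.cast_ne_zero.mpr (Nat.factorial_ne_zero _)
    have hf4 : (((K+j).factorial : ℝ)) ≠ 0 := Nat.cast_ne_zero.mpr (Nat.factorial_ne_zero _)
    have hf5 : (((n-K).factorial : ℝ)) ≠ 0 := Nat.cast_ne_zero.mpr (Nat.factorial_ne_zero _)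
    field_simp
  rw [Finset.sum_congr rfl hterm, ← Finset.mul_sum]
  have hdag := dagger θ (N:ℝ) n K hKn
  rw [hdag]
  -- relate ffR to ff
  have hff : ff N n = ff N K * ffR ((N:ℝ) - (K:ℝ)) (n-K) := by
    rw [ff_eq_ffR, ff_eq_ffR]
    have := ffR_add (N:ℝ) K (n-K)
    rw [show K + (n-K) = n from by omega] at this
    exact this
  have hffR : ffR ((N:ℝ) - (K:ℝ)) (n-K) = ff N n / ff N K := by
    rw [eq_div_iff hffNK.ne']
    linear_combination -hff
  rw [hffR]
  simp only [acoef, if_neg hne]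
  have hrfne2 : rf (θ + (N:ℝ)) n ≠ 0 := rf_ne_zero hθN _
  have hf1 : ((K.factorial : ℝ)) ≠ 0 := Nat.cast_ne_zero.mpr (Nat.factorial_ne_zero K)
  have hf5 : (((n-K).factorial : ℝ)) ≠ 0 := Nat.cast_ne_zero.mpr (Nat.factorial_ne_zero _)
  rw [hCst]
  field_simp

end StmtAux

/-- second (Gasper-type) representation of the Hahn polynomial kernel. -/
theorem stmt_5 (d : ℕ) (hd : 2 ≤ d) (α : Fin d → ℝ) (hα : ∀ i, 0 < α i)
    (N : ℕ) (r s : Fin d → ℕ) (hr : ∑ i, r i = N) (hs : ∑ i, s i = N)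
    (n : ℕ) (hn : n ≤ N) :
    Hker α N n r s = (ff N n / rf ((∑ i, α i) + N) n) *
      ∑ m ∈ Finset.range (n + 1), acoef (∑ i, α i) n m * chiH α N m r s := by
  have hθ : 0 < ∑ i, α i :=
    Finset.sum_pos (fun i _ => hα i) ⟨⟨0, by omega⟩, Finset.mem_univ _⟩
  have hθN : (0:ℝ) < (∑ i, α i) + N := by positivity
  have hffn : ff N n ≠ 0 := by
    have h0 : N.descFactorial n ≠ 0 := by
      rw [Ne, Nat.descFactorial_eq_zero_iff_lt]; omega
    simp only [ff]
    exact_mod_cast h0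
  have hrfn : rf ((∑ i, α i) + N) n ≠ 0 := StmtAux.rf_ne_zero hθN n
  simp only [Hker]
  have hx : ∀ m ∈ Finset.range (n+1), acoef (∑ i, α i) n m * xiH α m r s
      = ∑ K ∈ Finset.range (m+1),
          acoef (∑ i, α i) n m * (StmtAux.Tc (∑ i, α i) N m K * chiH α N K r s) := by
    intro m hm
    rw [StmtAux.lemma2 α hα hθ N r s hr hs m
      (le_trans (Nat.lt_succ_iff.mp (Finset.mem_range.mp hm)) hn), Finset.mul_sum]
  rw [Finset.sum_congr rfl hx]
  have hswap : ∑ m ∈ Finset.range (n+1), ∑ K ∈ Finset.range (m+1),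
        acoef (∑ i, α i) n m * (StmtAux.Tc (∑ i, α i) N m K * chiH α N K r s)
      = ∑ K ∈ Finset.range (n+1), ∑ m ∈ Finset.Ico K (n+1),
        acoef (∑ i, α i) n m * (StmtAux.Tc (∑ i, α i) N m K * chiH α N K r s) := by
    simp only [Finset.range_eq_Ico]
    rw [← Finset.sum_Ico_Ico_comm]
  rw [hswap]
  have hL : ∀ K ∈ Finset.range (n+1), ∑ m ∈ Finset.Ico K (n+1),
        acoef (∑ i, α i) n m * (StmtAux.Tc (∑ i, α i) N m K * chiH α N K r s)
      = ((ff N n / rf ((∑ i, α i) + N) n)^2 * acoef (∑ i, α i) n K) * chiH α N K r s := by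
    intro K hK
    have hKn : K ≤ n := Nat.lt_succ_iff.mp (Finset.mem_range.mp hK)
    have hre : ∀ m ∈ Finset.Ico K (n+1),
        acoef (∑ i, α i) n m * (StmtAux.Tc (∑ i, α i) N m K * chiH α N K r s)
          = (acoef (∑ i, α i) n m * StmtAux.Tc (∑ i, α i) N m K) * chiH α N K r s := by
      intro m _; ring
    rw [Finset.sum_congr rfl hre, ← Finset.sum_mul, StmtAux.L3 (∑ i, α i) hθ N n K hKn hn]
  rw [Finset.sum_congr rfl hL, Finset.mul_sum, Finset.mul_sum]
  refine Finset.sum_congr rfl fun K _ => ?_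
  field_simp
end
end

section
/- Let α, β > 0 and 0 < μ < α. Then for every n ∈ ℕ and every x ∈ [0,1], ∫_0^1 R_n^{α,β}(1−(1−x)z) · z^{β−1}(1−z)^{μ−1}/B(β,μ) dz = R_n^{α−μ, β+μ}(x). -/
open MeasureTheory Finset

noncomputable section

lemma rf_pos_s9 {a : ℝ} (ha : 0 < a) (k : ℕ) : 0 < rf a k := by
  induction k with
  | zero => simp [rf]
  | succ m ih =>
    rw [rf_succ]
    exact mul_pos ih (add_pos_of_pos_of_nonneg ha (Nat.cast_nonneg m))

lemma Gamma_rf {b : ℝ} (hb : 0 < b) (k : ℕ) :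
    Real.Gamma (b + k) = rf b k * Real.Gamma b := by
  induction k with
  | zero => simp [rf]
  | succ m ih =>
    have h : (b + ((m : ℝ) + 1)) = (b + m) + 1 := by ring
    have hbm : (0 : ℝ) < b + m := add_pos_of_pos_of_nonneg hb (Nat.cast_nonneg m)
    rw [Nat.cast_succ, h, Real.Gamma_add_one hbm.ne', ih, rf_succ]
    ring

lemma beta_integrableOn {u v : ℝ} (hu : 0 < u) (hv : 0 < v) :
    IntegrableOn (fun z : ℝ => z ^ (u - 1) * (1 - z) ^ (v - 1)) (Set.Ioc 0 1) := by
  have h := (Complex.betaIntegral_convergent (u := u) (v := v) (by simpa using hu)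
    (by simpa using hv)).1
  have hre : IntegrableOn
      (fun x : ℝ => ((x : ℂ) ^ ((u : ℂ) - 1) * (1 - (x : ℂ)) ^ ((v : ℂ) - 1)).re)
      (Set.Ioc 0 1) := h.re
  refine hre.congr_fun ?_ measurableSet_Ioc
  intro z hz
  have hz0 : (0 : ℝ) ≤ z := hz.1.le
  have hz1 : (0 : ℝ) ≤ 1 - z := by linarith [hz.2]
  have e : ((z : ℂ) ^ ((u : ℂ) - 1) * (1 - (z : ℂ)) ^ ((v : ℂ) - 1)) =
      ((z ^ (u - 1) * (1 - z) ^ (v - 1) : ℝ) : ℂ) := by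
    rw [Complex.ofReal_mul, Complex.ofReal_cpow hz0, Complex.ofReal_cpow hz1]
    push_cast
    ring_nf
  simp only [e, Complex.ofReal_re]

lemma beta_eval {u v : ℝ} (hu : 0 < u) (hv : 0 < v) :
    ∫ z in Set.Ioc (0 : ℝ) 1, z ^ (u - 1) * (1 - z) ^ (v - 1) = BetaFn u v := by
  have key : Complex.betaIntegral u v =
      ((∫ z in Set.Ioc (0 : ℝ) 1, z ^ (u - 1) * (1 - z) ^ (v - 1) : ℝ) : ℂ) := by
    rw [Complex.betaIntegral, intervalIntegral.integral_of_le zero_le_one]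
    have ecg : Set.EqOn (fun z : ℝ => (z : ℂ) ^ ((u : ℂ) - 1) * (1 - (z : ℂ)) ^ ((v : ℂ) - 1))
        (fun z : ℝ => ((z ^ (u - 1) * (1 - z) ^ (v - 1) : ℝ) : ℂ)) (Set.Ioc 0 1) := by
      intro z hz
      have hz0 : (0 : ℝ) ≤ z := hz.1.le
      have hz1 : (0 : ℝ) ≤ 1 - z := by linarith [hz.2]
      simp only
      rw [Complex.ofReal_mul, Complex.ofReal_cpow hz0, Complex.ofReal_cpow hz1]
      push_cast
      ring_nf
    rw [setIntegral_congr_fun measurableSet_Ioc ecg]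
    exact integral_ofReal
  have h1 := Complex.Gamma_mul_Gamma_eq_betaIntegral (s := (u : ℂ)) (t := v)
    (by simpa using hu) (by simpa using hv)
  rw [key, ← Complex.ofReal_add, Complex.Gamma_ofReal, Complex.Gamma_ofReal,
    Complex.Gamma_ofReal, ← Complex.ofReal_mul, ← Complex.ofReal_mul] at h1
  have h2 : Real.Gamma u * Real.Gamma v =
      Real.Gamma (u + v) * ∫ z in Set.Ioc (0 : ℝ) 1, z ^ (u - 1) * (1 - z) ^ (v - 1) :=
    Complex.ofReal_injective h1
  have hG : Real.Gamma (u + v) ≠ 0 := (Real.Gamma_pos_of_pos (by linarith)).ne'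
  unfold BetaFn
  field_simp
  linarith [h2]

lemma beta_ratio {b μ : ℝ} (hb : 0 < b) (hμ : 0 < μ) (k : ℕ) :
    BetaFn (b + k) μ = rf b k / rf (b + μ) k * BetaFn b μ := by
  have hbμ : (0 : ℝ) < b + μ := by linarith
  have h1 : Real.Gamma (b + k) = rf b k * Real.Gamma b := Gamma_rf hb k
  have h2 : Real.Gamma (b + (k : ℝ) + μ) = rf (b + μ) k * Real.Gamma (b + μ) := by
    rw [show b + (k : ℝ) + μ = (b + μ) + k by ring, Gamma_rf hbμ k]
  have hr : rf (b + μ) k ≠ 0 := (rf_pos_s9 hbμ k).ne'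
  have hGb : Real.Gamma (b + μ) ≠ 0 := (Real.Gamma_pos_of_pos hbμ).ne'
  have hGk : Real.Gamma (b + (k : ℝ) + μ) ≠ 0 :=
    (Real.Gamma_pos_of_pos (by positivity)).ne'
  unfold BetaFn
  rw [h1]
  rw [h2] at hGk ⊢
  field_simp

/-- first Beta-integral identity for normalized Jacobi polynomials. -/
theorem stmt_9 (a b μ : ℝ) (ha : 0 < a) (hb : 0 < b) (hμ0 : 0 < μ) (hμa : μ < a)
    (n : ℕ) (x : ℝ) (hx : x ∈ Set.Icc (0 : ℝ) 1) :
    (∫ z in Set.Icc (0 : ℝ) 1,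
        Rpoly a b n (1 - (1 - x) * z) * (z ^ (b - 1) * (1 - z) ^ (μ - 1) / BetaFn b μ)) =
      Rpoly (a - μ) (b + μ) n x := by
  have hbμ : (0 : ℝ) < b + μ := by linarith
  have hB : 0 < BetaFn b μ :=
    div_pos (mul_pos (Real.Gamma_pos_of_pos hb) (Real.Gamma_pos_of_pos hμ0))
      (Real.Gamma_pos_of_pos hbμ)
  rw [MeasureTheory.integral_Icc_eq_integral_Ioc]
  have congr1 : Set.EqOn
      (fun z => Rpoly a b n (1 - (1 - x) * z) * (z ^ (b - 1) * (1 - z) ^ (μ - 1) / BetaFn b μ))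
      (fun z => ∑ k ∈ Finset.range (n + 1),
        ((-1 : ℝ) ^ k * (n.choose k : ℝ) * (rf ((n : ℝ) + (a + b) - 1) k / rf b k) * (1 - x) ^ k)
          * (z ^ (b + (k : ℝ) - 1) * (1 - z) ^ (μ - 1) / BetaFn b μ))
      (Set.Ioc 0 1) := by
    intro z hz
    simp only [Rpoly, Finset.sum_mul]
    refine Finset.sum_congr rfl fun k _ => ?_
    have h1 : (1 - (1 - (1 - x) * z)) = (1 - x) * z := by ring
    have h2 : z ^ (b + (k : ℝ) - 1) = z ^ (k : ℕ) * z ^ (b - 1) := by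
      rw [← Real.rpow_natCast z k, ← Real.rpow_add hz.1]
      ring_nf
    rw [h1, mul_pow, h2]
    ring
  rw [setIntegral_congr_fun measurableSet_Ioc congr1]
  rw [MeasureTheory.integral_finset_sum]
  · have hval : ∀ k : ℕ,
        (∫ z in Set.Ioc (0 : ℝ) 1, z ^ (b + (k : ℝ) - 1) * (1 - z) ^ (μ - 1) / BetaFn b μ)
          = rf b k / rf (b + μ) k := by
      intro k
      rw [MeasureTheory.integral_div, beta_eval (by positivity) hμ0, beta_ratio hb hμ0 k,
        mul_div_assoc, div_self hB.ne', mul_one]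
    simp only [MeasureTheory.integral_const_mul, hval]
    unfold Rpoly
    refine Finset.sum_congr rfl fun k _ => ?_
    have hab : (n : ℝ) + ((a - μ) + (b + μ)) - 1 = (n : ℝ) + (a + b) - 1 := by ring
    rw [hab]
    have hrb : rf b k ≠ 0 := (rf_pos_s9 hb k).ne'
    have hrbμ : rf (b + μ) k ≠ 0 := (rf_pos_s9 hbμ k).ne'
    field_simp
    try ring
  · intro k _
    exact (((beta_integrableOn (by positivity) hμ0).div_const _).const_mul _)
end
end
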